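/- arXiv:1504.03506 — 6 statements merged into one kernel-verified Lean document; each statement's English description precedes it below -/
import Mathlib

section
/- Let λ be a σ-finite measure, f ≥ 0 a measurable function with ∫ f dλ = 1, g a measurable function, q ≥ 1, ε > 0, and B a measurable set with λ(B) = M ∈ (0,∞) on which |g| ≥ ε. Then ∫ |g(x)|^q f(x)^{1−q} dλ(x) ≥ ε^q (M/2)^q. -/
open MeasureTheory

lemma ennreal_rpow_anti {x c : ENNReal} {z : ℝ} (hz : z ≤ 0) (hxc : x ≤ c) :
    c ^ z ≤ x ^ z := by
  rcases eq_or_lt_of_le hz with h0 | hneg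
  · subst h0; simp
  · rw [← neg_neg z, ENNReal.rpow_neg x, ENNReal.rpow_neg c]
    exact ENNReal.inv_le_inv.mpr (ENNReal.rpow_le_rpow hxc (by linarith))

/-- If `f` is a probability density w.r.t. a σ-finite measure `λ`, `g` is
measurable, `q ≥ 1`, and `|g| ≥ ε` on a measurable set `B` of finite positive measure `M`,
then `∫ |g|^q f^{1-q} dλ ≥ ε^q (M/2)^q`.  Here `f(x)^{1-q}` is interpreted in `[0,∞]`
(so it is `+∞` when `f x = 0`, `q > 1`). -/
theorem stmt_2 {α : Type*} [MeasurableSpace α] (lam : Measure α) [SigmaFinite lam]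
    (f g : α → ℝ) (hfmeas : Measurable f) (hf0 : ∀ x, 0 ≤ f x)
    (hfint : ∫⁻ x, ENNReal.ofReal (f x) ∂lam = 1)
    (hgmeas : Measurable g) (q : ℝ) (hq : 1 ≤ q) (ε : ℝ) (hε : 0 < ε)
    (M : ℝ) (hM : 0 < M) (B : Set α) (hB : MeasurableSet B)
    (hBM : lam B = ENNReal.ofReal M)
    (hgB : ∀ x ∈ B, ε ≤ |g x|) :
    ENNReal.ofReal (ε ^ q * (M / 2) ^ q) ≤
      ∫⁻ x, (ENNReal.ofReal |g x|) ^ q * (ENNReal.ofReal (f x)) ^ (1 - q) ∂lam := by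
  set c : ℝ := 2 / M with hc
  have hcpos : 0 < c := by positivity
  -- Markov inequality
  have hmarkov : lam {x | ENNReal.ofReal c ≤ ENNReal.ofReal (f x)} ≤ ENNReal.ofReal (M / 2) := by
    have h := mul_meas_ge_le_lintegral₀ (μ := lam)
      (hfmeas.ennreal_ofReal.aemeasurable) (ENNReal.ofReal c)
    rw [hfint] at h
    have hc0 : ENNReal.ofReal c ≠ 0 := by simp [ENNReal.ofReal_eq_zero, not_le, hcpos]
    rw [mul_comm] at h
    have h2 := ENNReal.le_div_iff_mul_le (Or.inl hc0) (Or.inl ENNReal.ofReal_ne_top) |>.mpr h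
    calc lam {x | ENNReal.ofReal c ≤ ENNReal.ofReal (f x)} ≤ 1 / ENNReal.ofReal c := h2
      _ = ENNReal.ofReal (M / 2) := by
          rw [one_div, ← ENNReal.ofReal_inv_of_pos hcpos, hc]
          norm_num
  set A : Set α := B ∩ {x | f x < c} with hA
  have hAmeas : MeasurableSet A := hB.inter (measurableSet_lt hfmeas measurable_const)
  -- measure of A
  have hmeasA : ENNReal.ofReal (M / 2) ≤ lam A := by
    have hsub : B ⊆ A ∪ {x | ENNReal.ofReal c ≤ ENNReal.ofReal (f x)} := by
      intro x hx
      rcases lt_or_ge (f x) c with h | h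
      · exact Or.inl ⟨hx, h⟩
      · exact Or.inr (ENNReal.ofReal_le_ofReal h)
    have h1 : ENNReal.ofReal M ≤ lam A + ENNReal.ofReal (M / 2) := by
      calc ENNReal.ofReal M = lam B := hBM.symm
        _ ≤ lam (A ∪ {x | ENNReal.ofReal c ≤ ENNReal.ofReal (f x)}) := measure_mono hsub
        _ ≤ lam A + lam {x | ENNReal.ofReal c ≤ ENNReal.ofReal (f x)} := measure_union_le _ _
        _ ≤ lam A + ENNReal.ofReal (M / 2) := add_le_add_right hmarkov _
    have hMsplit : ENNReal.ofReal M = ENNReal.ofReal (M / 2) + ENNReal.ofReal (M / 2) := by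
      rw [← ENNReal.ofReal_add (by linarith) (by linarith)]
      norm_num
    rw [hMsplit] at h1
    exact ENNReal.le_of_add_le_add_right ENNReal.ofReal_ne_top
      (by rwa [add_comm (lam A)] at h1)
  -- pointwise bound on A
  set K : ENNReal := ENNReal.ofReal ε ^ q * ENNReal.ofReal c ^ (1 - q) with hK
  have hptwise : ∀ x ∈ A, K ≤ (ENNReal.ofReal |g x|) ^ q * (ENNReal.ofReal (f x)) ^ (1 - q) := by
    rintro x ⟨hxB, hxc⟩
    refine mul_le_mul' (ENNReal.rpow_le_rpow (ENNReal.ofReal_le_ofReal (hgB x hxB)) (by linarith)) ?_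
    exact ennreal_rpow_anti (by linarith) (ENNReal.ofReal_le_ofReal hxc.le)
  -- compute K * (M/2)
  have hKval : ENNReal.ofReal (ε ^ q * (M / 2) ^ q) = K * ENNReal.ofReal (M / 2) := by
    have h2M : c ^ (1 - q) = (M / 2) ^ (q - 1) := by
      rw [hc, show (2 : ℝ) / M = (M / 2)⁻¹ by rw [inv_div],
        Real.inv_rpow (by positivity), ← Real.rpow_neg (by positivity)]
      congr 1; ring
    have hsplit : (M / 2) ^ q = (M / 2) ^ (q - 1) * (M / 2) := by
      nth_rewrite 3 [← Real.rpow_one (M / 2)]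
      rw [← Real.rpow_add (by positivity)]
      norm_num
    rw [hK, ENNReal.ofReal_rpow_of_pos hε, ENNReal.ofReal_rpow_of_pos hcpos, h2M,
      ← ENNReal.ofReal_mul (by positivity), ← ENNReal.ofReal_mul (by positivity)]
    congr 1
    rw [hsplit]; ring
  rw [hKval]
  calc K * ENNReal.ofReal (M / 2) ≤ K * lam A := mul_le_mul_right hmeasA _
    _ = ∫⁻ _ in A, K ∂lam := (setLIntegral_const A K).symm
    _ ≤ ∫⁻ x in A, (ENNReal.ofReal |g x|) ^ q * (ENNReal.ofReal (f x)) ^ (1 - q) ∂lam :=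
        setLIntegral_mono (by fun_prop) hptwise
    _ ≤ ∫⁻ x, (ENNReal.ofReal |g x|) ^ q * (ENNReal.ofReal (f x)) ^ (1 - q) ∂lam :=
        setLIntegral_le_lintegral _ _
end

section
/- Let d ≥ 1 and let φ : ℝ^{2d} → ℝ^{2d} be the map φ(π₁,…,π_d,θ₁,…,θ_d) = (Σ_{j=1}^d π_j, Σ_{j=1}^d π_j θ_j, Σ_{j=1}^d π_j θ_j², …, Σ_{j=1}^d π_j θ_j^{2d−1}). Then the Jacobian determinant of φ at (π₁,…,π_d,θ₁,…,θ_d) equals (−1)^{d(d−1)/2} · π₁⋯π_d · ∏_{1≤j<k≤d} (θ_j − θ_k)^4. -/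
open Finset


lemma aux_binom (k : ℕ) (x ε : ℝ) :
    x ^ k + ε * ∑ m ∈ Finset.range k, ((k.choose (m+1) : ℝ)) * x ^ (k - 1 - m) * ε ^ m
      = (x + ε) ^ k := by
  rw [add_comm x ε, add_pow, Finset.sum_range_succ']
  simp only [pow_zero, one_mul, Nat.choose_zero_right, Nat.cast_one, mul_one, Nat.sub_zero]
  rw [add_comm, Finset.mul_sum]
  congr 1
  refine Finset.sum_congr rfl fun m hm => ?_
  have : k - (m + 1) = k - 1 - m := by omega
  rw [this]; ring


lemma aux_split (d : ℕ) (θ : Fin d → ℝ) (ε : ℝ) :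
    (∏ i : Fin (d + d), ∏ j ∈ Ioi i,
        (Sum.elim θ (fun a => θ a + ε) (finSumFinEquiv.symm j)
          - Sum.elim θ (fun a => θ a + ε) (finSumFinEquiv.symm i)))
      = (∏ p ∈ univ.filter (fun p : Fin d × Fin d => p.1 < p.2), (θ p.2 - θ p.1)) ^ 2
        * ∏ p : Fin d × Fin d, (θ p.2 + ε - θ p.1) := by
  set w : Fin (d + d) → ℝ := fun i => Sum.elim θ (fun a => θ a + ε) (finSumFinEquiv.symm i) with hw
  have h1 : ∀ i : Fin (d + d), ∏ j ∈ Ioi i, (w j - w i)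
      = ∏ j : Fin (d + d), if i < j then (w j - w i) else 1 := by
    intro i
    rw [← Finset.prod_filter]
    congr 1
    ext j; simp
  rw [Finset.prod_congr rfl fun i _ => h1 i]
  rw [← Equiv.prod_comp (finSumFinEquiv (m := d) (n := d))]
  have h2 : ∀ s : Fin d ⊕ Fin d,
      (∏ j : Fin (d + d), if finSumFinEquiv s < j then (w j - w (finSumFinEquiv s)) else 1)
      = ∏ t : Fin d ⊕ Fin d, if finSumFinEquiv s < finSumFinEquiv t
          then (Sum.elim θ (fun a => θ a + ε) t - Sum.elim θ (fun a => θ a + ε) s) else 1 := by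
    intro s
    rw [← Equiv.prod_comp (finSumFinEquiv (m := d) (n := d))]
    simp [hw]
  simp only [h2]
  have hll : ∀ a b : Fin d, ((finSumFinEquiv (Sum.inl a) : Fin (d + d)) < finSumFinEquiv (Sum.inl b)) ↔ a < b := by
    intro a b
    simp only [finSumFinEquiv_apply_left, Fin.lt_def, Fin.coe_castAdd]
  have hlr : ∀ a b : Fin d, (finSumFinEquiv (Sum.inl a) : Fin (d + d)) < finSumFinEquiv (Sum.inr b) := by
    intro a b
    simp only [finSumFinEquiv_apply_left, finSumFinEquiv_apply_right, Fin.lt_def,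
      Fin.coe_castAdd, Fin.coe_natAdd]
    omega
  have hrl : ∀ a b : Fin d, ¬ ((finSumFinEquiv (Sum.inr a) : Fin (d + d)) < finSumFinEquiv (Sum.inl b)) := by
    intro a b
    simp only [finSumFinEquiv_apply_left, finSumFinEquiv_apply_right, Fin.lt_def,
      Fin.coe_castAdd, Fin.coe_natAdd, not_lt]
    omega
  have hrr : ∀ a b : Fin d, ((finSumFinEquiv (Sum.inr a) : Fin (d + d)) < finSumFinEquiv (Sum.inr b)) ↔ a < b := by
    intro a b
    simp only [finSumFinEquiv_apply_right, Fin.lt_def, Fin.coe_natAdd]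
    omega
  have hP : ∀ g : Fin d → Fin d → ℝ,
      (∏ a : Fin d, ∏ b : Fin d, if a < b then g a b else 1)
        = ∏ p ∈ univ.filter (fun p : Fin d × Fin d => p.1 < p.2), g p.1 p.2 := by
    intro g
    rw [Finset.prod_filter, ← Fintype.prod_prod_type']
  simp only [Fintype.prod_sum_type, Sum.elim_inl, Sum.elim_inr]
  simp only [hll, hrr, if_pos (hlr _ _), if_neg (hrl _ _)]
  simp only [Finset.prod_const_one, one_mul, hP]
  have hQ : (∏ a : Fin d, ∏ b : Fin d, (θ b + ε - θ a)) = ∏ p : Fin d × Fin d, (θ p.2 + ε - θ p.1) := by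
    rw [← Fintype.prod_prod_type']
  rw [Finset.prod_mul_distrib, hP (fun a b => θ b - θ a), hQ]
  have : ∀ p : Fin d × Fin d, θ p.2 + ε - (θ p.1 + ε) = θ p.2 - θ p.1 := fun p => by ring
  simp only [this]
  ring


lemma aux_diag (d : ℕ) (θ : Fin d → ℝ) (ε : ℝ) :
    (∏ p : Fin d × Fin d, (θ p.2 + ε - θ p.1))
      = ε ^ d * ∏ p ∈ (univ : Finset (Fin d)).offDiag, (θ p.2 + ε - θ p.1) := by
  rw [← Finset.prod_filter_mul_prod_filter_not univ (fun p : Fin d × Fin d => p.1 = p.2)]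
  have h : filter (fun p : Fin d × Fin d => p.1 = p.2) univ = (univ : Finset (Fin d)).diag := by
    ext p; simp [Finset.mem_diag]
  have h2 : ∀ p ∈ (univ : Finset (Fin d)).diag, θ p.2 + ε - θ p.1 = ε := by
    intro p hp
    rw [Finset.mem_diag] at hp
    rw [hp.2]; ring
  have h3 : filter (fun p : Fin d × Fin d => ¬ p.1 = p.2) univ
      = (univ : Finset (Fin d)).offDiag := by
    ext p; simp [Finset.mem_offDiag]
  rw [h, h3, Finset.prod_congr rfl h2, Finset.prod_const, Finset.diag_card, Finset.card_univ,
    Fintype.card_fin]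

lemma aux_sign (d : ℕ) (θ : Fin d → ℝ) :
    (∏ p ∈ (univ : Finset (Fin d)).offDiag, (θ p.2 - θ p.1))
      = (-1 : ℝ) ^ (d * (d - 1) / 2)
        * (∏ p ∈ univ.filter (fun p : Fin d × Fin d => p.1 < p.2), (θ p.2 - θ p.1)) ^ 2 := by
  have hsplit := Finset.prod_filter_mul_prod_filter_not ((univ : Finset (Fin d)).offDiag)
    (fun p : Fin d × Fin d => p.1 < p.2) (fun p => θ p.2 - θ p.1)
  have hlt : filter (fun p : Fin d × Fin d => p.1 < p.2) (univ : Finset (Fin d)).offDiag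
      = filter (fun p : Fin d × Fin d => p.1 < p.2) univ := by
    ext p
    simp only [Finset.mem_filter, Finset.mem_offDiag, Finset.mem_univ, true_and, ne_eq]
    constructor
    · exact fun h => h.2
    · exact fun h => ⟨ne_of_lt h, h⟩
  have hgt : filter (fun p : Fin d × Fin d => ¬ p.1 < p.2) (univ : Finset (Fin d)).offDiag
      = filter (fun p : Fin d × Fin d => p.2 < p.1) univ := by
    ext p
    simp only [Finset.mem_filter, Finset.mem_offDiag, Finset.mem_univ, true_and, ne_eq, not_lt]
    constructor
    · rintro ⟨hne, hle⟩
      exact lt_of_le_of_ne hle (fun h => hne h.symm)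
    · intro h
      exact ⟨(ne_of_lt h).symm, le_of_lt h⟩
  have hswap : (∏ p ∈ filter (fun p : Fin d × Fin d => p.2 < p.1) univ, (θ p.2 - θ p.1))
      = ∏ p ∈ filter (fun p : Fin d × Fin d => p.1 < p.2) univ, (-1) * (θ p.2 - θ p.1) := by
    refine Finset.prod_nbij' Prod.swap Prod.swap ?_ ?_ ?_ ?_ ?_ <;>
      simp_all [Finset.mem_filter] <;> intros <;> ring
  have hcardswap : (filter (fun p : Fin d × Fin d => p.2 < p.1) univ).card
      = (filter (fun p : Fin d × Fin d => p.1 < p.2) univ).card := by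
    refine Finset.card_nbij' Prod.swap Prod.swap ?_ ?_ ?_ ?_ <;> simp_all [Finset.mem_filter, Set.MapsTo, Set.LeftInvOn, Set.RightInvOn]
  have hcards : (filter (fun p : Fin d × Fin d => p.1 < p.2) univ).card
      + (filter (fun p : Fin d × Fin d => p.2 < p.1) univ).card
      = (univ : Finset (Fin d)).offDiag.card := by
    rw [← hlt, ← hgt]
    rw [Finset.card_filter_add_card_filter_not]
  have hoff : (univ : Finset (Fin d)).offDiag.card = d * (d - 1) := by
    rw [Finset.offDiag_card, Finset.card_univ, Fintype.card_fin]
    cases d with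
    | zero => rfl
    | succ n => rw [Nat.succ_sub_one, Nat.mul_succ, Nat.add_sub_cancel]
  have hc : (filter (fun p : Fin d × Fin d => p.1 < p.2) univ).card = d * (d - 1) / 2 := by
    rw [hoff, hcardswap] at hcards
    set t := d * (d - 1)
    omega
  rw [← hsplit, hlt, hgt, hswap, Finset.prod_mul_distrib, Finset.prod_const, hc]
  ring

lemma aux_confluent (d : ℕ) (θ : Fin d → ℝ) :
    (Matrix.of fun k i : Fin (d + d) =>
        Sum.elim (fun a => θ a ^ (k : ℕ)) (fun a => (k : ℕ) * θ a ^ ((k : ℕ) - 1))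
          (finSumFinEquiv.symm i)).det
      = (-1 : ℝ) ^ (d * (d - 1) / 2)
        * (∏ p ∈ univ.filter (fun p : Fin d × Fin d => p.1 < p.2), (θ p.2 - θ p.1)) ^ 4 := by
  set P : ℝ := ∏ p ∈ univ.filter (fun p : Fin d × Fin d => p.1 < p.2), (θ p.2 - θ p.1) with hPdef
  set F : ℝ → Matrix (Fin (d + d)) (Fin (d + d)) ℝ := fun ε => Matrix.of fun k i =>
    Sum.elim (fun a => θ a ^ (k : ℕ))
      (fun a => ∑ m ∈ Finset.range (k : ℕ),
        (((k : ℕ).choose (m+1) : ℝ)) * θ a ^ ((k : ℕ) - 1 - m) * ε ^ m)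
      (finSumFinEquiv.symm i) with hFdef
  set g : ℝ → ℝ := fun ε => P ^ 2 * ∏ p ∈ (univ : Finset (Fin d)).offDiag, (θ p.2 + ε - θ p.1)
    with hgdef
  -- continuity
  have hFc : Continuous F := by
    apply continuous_matrix
    intro k i
    simp only [hFdef, Matrix.of_apply]
    rcases finSumFinEquiv.symm i with a | a
    · simp only [Sum.elim_inl]; exact continuous_const
    · simp only [Sum.elim_inr]
      exact continuous_finset_sum _ fun m _ => by fun_prop
  have hdetc : Continuous fun ε => (F ε).det := hFc.matrix_det
  have hgc : Continuous g := by
    apply Continuous.mul continuous_const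
    exact continuous_finset_prod _ fun p _ => by fun_prop
  -- equality off zero
  have heq : ∀ ε : ℝ, ε ≠ 0 → (F ε).det = g ε := by
    intro ε hε
    set w : Fin (d + d) → ℝ := fun i => Sum.elim θ (fun a => θ a + ε) (finSumFinEquiv.symm i)
      with hwdef
    set C : Matrix (Fin (d + d)) (Fin (d + d)) ℝ :=
      (Matrix.fromBlocks (1 : Matrix (Fin d) (Fin d) ℝ) 1 0
        (ε • (1 : Matrix (Fin d) (Fin d) ℝ))).submatrix finSumFinEquiv.symm finSumFinEquiv.symm
      with hCdef
    have hV : (Matrix.vandermonde w).transpose = F ε * C := by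
      ext k i
      rw [Matrix.mul_apply, Matrix.transpose_apply, Matrix.vandermonde_apply]
      rw [← Equiv.sum_comp (finSumFinEquiv (m := d) (n := d))]
      simp only [hFdef, hCdef, hwdef, Matrix.of_apply, Matrix.submatrix_apply,
        Equiv.symm_apply_apply]
      rcases hsi : finSumFinEquiv.symm i with b | b
      · rw [Fintype.sum_sum_type]
        simp only [Sum.elim_inl, Sum.elim_inr, Matrix.fromBlocks_apply₁₁,
          Matrix.fromBlocks_apply₂₁, Matrix.one_apply, Matrix.zero_apply, mul_zero,
          Finset.sum_const_zero, add_zero, mul_ite, mul_one]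
        simp [Finset.sum_ite_eq']
      · rw [Fintype.sum_sum_type]
        simp only [Sum.elim_inl, Sum.elim_inr, Matrix.fromBlocks_apply₁₂,
          Matrix.fromBlocks_apply₂₂, Matrix.one_apply, Matrix.smul_apply, smul_ite,
          smul_eq_mul, mul_ite, mul_one, mul_zero, smul_zero]
        rw [Finset.sum_ite_eq' univ b, Finset.sum_ite_eq' univ b]
        simp only [Finset.mem_univ, if_true]
        rw [mul_comm (∑ m ∈ Finset.range (k:ℕ), _) ε]
        exact (aux_binom (k : ℕ) (θ b) ε).symm
    have hdetC : C.det = ε ^ d := by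
      rw [hCdef]
      rw [Matrix.det_submatrix_equiv_self finSumFinEquiv.symm]
      rw [Matrix.det_fromBlocks_zero₂₁, Matrix.det_one, one_mul, Matrix.det_smul,
        Matrix.det_one, Fintype.card_fin, mul_one]
    have hdetV : (Matrix.vandermonde w).transpose.det = ε ^ d * g ε := by
      rw [Matrix.det_transpose, Matrix.det_vandermonde]
      have := aux_split d θ ε
      rw [hwdef]
      rw [this, aux_diag d θ ε, hgdef]
      ring
    have : ε ^ d * g ε = (F ε).det * ε ^ d := by
      rw [← hdetV, hV, Matrix.det_mul, hdetC]
    have h2 : g ε * ε ^ d = (F ε).det * ε ^ d := by rw [← this]; ring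
    exact (mul_right_cancel₀ (pow_ne_zero d hε) h2).symm
  -- extend by continuity
  have hext : (fun ε => (F ε).det) = g := by
    apply Continuous.ext_on (dense_compl_singleton (0 : ℝ)) hdetc hgc
    intro x hx
    exact heq x hx
  have hF0 : (F 0).det = g 0 := congrFun hext 0
  have hF0M : F 0 = Matrix.of fun k i : Fin (d + d) =>
      Sum.elim (fun a => θ a ^ (k : ℕ)) (fun a => (k : ℕ) * θ a ^ ((k : ℕ) - 1))
        (finSumFinEquiv.symm i) := by
    ext k i
    simp only [hFdef, Matrix.of_apply]
    rcases finSumFinEquiv.symm i with a | a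
    · simp
    · simp only [Sum.elim_inr]
      rw [Finset.sum_eq_single 0]
      · simp [Nat.choose_one_right]
      · intro m _ hm
        simp [zero_pow hm]
      · intro h
        simp only [Finset.mem_range] at h
        have : (k : ℕ) = 0 := by omega
        simp [this]
  rw [← hF0M, hF0, hgdef]
  simp only [add_zero]
  rw [aux_sign d θ]
  ring


lemma aux_entry (d : ℕ) (v : Fin (d + d) → ℝ)
    (φ : (Fin (d + d) → ℝ) → (Fin (d + d) → ℝ))
    (hφ : ∀ v k, φ v k =
      ∑ j : Fin d, v (finSumFinEquiv (Sum.inl j)) * v (finSumFinEquiv (Sum.inr j)) ^ (k : ℕ)) :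
    ∀ (k i : Fin (d + d)), fderiv ℝ φ v (Pi.single i 1) k
      = (Sum.elim (fun _ => (1:ℝ)) (fun j => v (finSumFinEquiv (Sum.inl j)))
          (finSumFinEquiv.symm i))
        * (Sum.elim (fun a => v (finSumFinEquiv (Sum.inr a)) ^ (k : ℕ))
            (fun a => (k : ℕ) * v (finSumFinEquiv (Sum.inr a)) ^ ((k : ℕ) - 1))
            (finSumFinEquiv.symm i)) := by
  set L : Fin (d + d) → (Fin (d + d) → ℝ) →L[ℝ] ℝ := fun k =>
    ∑ j : Fin d,
      (v (finSumFinEquiv (Sum.inl j)) •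
          (((k : ℕ) * v (finSumFinEquiv (Sum.inr j)) ^ ((k : ℕ) - 1)) •
            ContinuousLinearMap.proj (finSumFinEquiv (Sum.inr j)))
        + (v (finSumFinEquiv (Sum.inr j)) ^ (k : ℕ)) •
            ContinuousLinearMap.proj (finSumFinEquiv (Sum.inl j))) with hLdef
  have hder : ∀ k : Fin (d + d), HasFDerivAt
      (fun w : Fin (d + d) → ℝ =>
        ∑ j : Fin d, w (finSumFinEquiv (Sum.inl j)) * w (finSumFinEquiv (Sum.inr j)) ^ (k : ℕ))
      (L k) v := by
    intro k
    apply HasFDerivAt.fun_sum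
    intro j _
    have h1 : HasFDerivAt (fun w : Fin (d + d) → ℝ => w (finSumFinEquiv (Sum.inl j)))
        (ContinuousLinearMap.proj (R := ℝ) (φ := fun _ : Fin (d+d) => ℝ)
          (finSumFinEquiv (Sum.inl j))) v := by
      exact (ContinuousLinearMap.proj (R := ℝ) (φ := fun _ : Fin (d+d) => ℝ)
        (finSumFinEquiv (Sum.inl j))).hasFDerivAt
    have h2 : HasFDerivAt (fun w : Fin (d + d) → ℝ => w (finSumFinEquiv (Sum.inr j)) ^ (k : ℕ))
        (((k : ℕ) * v (finSumFinEquiv (Sum.inr j)) ^ ((k : ℕ) - 1)) •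
          ContinuousLinearMap.proj (R := ℝ) (φ := fun _ : Fin (d+d) => ℝ)
            (finSumFinEquiv (Sum.inr j))) v := by
      have hp : HasFDerivAt (fun w : Fin (d + d) → ℝ => w (finSumFinEquiv (Sum.inr j)))
          (ContinuousLinearMap.proj (R := ℝ) (φ := fun _ : Fin (d+d) => ℝ)
            (finSumFinEquiv (Sum.inr j))) v := by
        exact (ContinuousLinearMap.proj (R := ℝ) (φ := fun _ : Fin (d+d) => ℝ)
          (finSumFinEquiv (Sum.inr j))).hasFDerivAt
      exact (hasDerivAt_pow (k : ℕ) (v (finSumFinEquiv (Sum.inr j)))).comp_hasFDerivAt v hp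
    exact h1.mul h2
  have hφeq : φ = fun (w : Fin (d + d) → ℝ) (k : Fin (d + d)) =>
      ∑ j : Fin d, w (finSumFinEquiv (Sum.inl j)) * w (finSumFinEquiv (Sum.inr j)) ^ (k : ℕ) :=
    funext fun w => funext fun k => hφ w k
  have hφder : HasFDerivAt φ (ContinuousLinearMap.pi L) v := by
    rw [hφeq]
    exact hasFDerivAt_pi.mpr hder
  have hfd : fderiv ℝ φ v = ContinuousLinearMap.pi L := hφder.fderiv
  intro k i
  rw [hfd]
  obtain ⟨s, rfl⟩ : ∃ s, finSumFinEquiv s = i := ⟨finSumFinEquiv.symm i, by simp⟩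
  simp only [hLdef, ContinuousLinearMap.pi_apply, ContinuousLinearMap.sum_apply,
    ContinuousLinearMap.add_apply, ContinuousLinearMap.smul_apply,
    ContinuousLinearMap.proj_apply, smul_eq_mul, Equiv.symm_apply_apply]
  have c1 : ∀ x b : Fin d, (Fin.addNat x d = Fin.castAdd d b) ↔ False := by
    intro x b
    simp only [Fin.ext_iff, Fin.coe_addNat, Fin.coe_castAdd, iff_false]
    omega
  have c2 : ∀ x b : Fin d, (Fin.castAdd d x = Fin.addNat b d) ↔ False := by
    intro x b
    simp only [Fin.ext_iff, Fin.coe_addNat, Fin.coe_castAdd, iff_false]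
    omega
  have c3 : ∀ x b : Fin d, (Fin.addNat x d = Fin.addNat b d) ↔ (x = b) := by
    intro x b
    simp only [Fin.ext_iff, Fin.coe_addNat]
    omega
  rcases s with b | b
  · simp [Pi.single_apply, c1, c2, c3, mul_ite, mul_one, mul_zero,
      Finset.sum_ite_eq']
  · simp [Pi.single_apply, c1, c2, c3, mul_ite, mul_one, mul_zero,
      Finset.sum_ite_eq']


/-- Jacobian of the moment map: the Jacobian determinant of
`φ(π₁,…,π_d,θ₁,…,θ_d) = (Σπ_j, Σπ_jθ_j, …, Σπ_jθ_j^{2d-1})` equals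
`(−1)^{d(d−1)/2} π₁⋯π_d ∏_{j<k} (θ_j − θ_k)^4`. -/
theorem stmt_7 (d : ℕ) (hd : 1 ≤ d)
    (φ : (Fin (d + d) → ℝ) → (Fin (d + d) → ℝ))
    (hφ : ∀ v k, φ v k =
      ∑ j : Fin d, v (finSumFinEquiv (Sum.inl j)) * v (finSumFinEquiv (Sum.inr j)) ^ (k : ℕ))
    (v : Fin (d + d) → ℝ) :
    Matrix.det (Matrix.of fun k i : Fin (d + d) =>
        fderiv ℝ φ v (Pi.single i 1) k) =
      (-1 : ℝ) ^ (d * (d - 1) / 2) *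
        (∏ j : Fin d, v (finSumFinEquiv (Sum.inl j))) *
        ∏ p ∈ univ.filter (fun p : Fin d × Fin d => p.1 < p.2),
          (v (finSumFinEquiv (Sum.inr p.1)) - v (finSumFinEquiv (Sum.inr p.2))) ^ 4 := by
  have hentry := aux_entry d v φ hφ
  have hM : (Matrix.of fun k i : Fin (d + d) => fderiv ℝ φ v (Pi.single i 1) k)
      = Matrix.of fun k i : Fin (d + d) =>
          (Sum.elim (fun _ => (1:ℝ)) (fun j => v (finSumFinEquiv (Sum.inl j)))
            (finSumFinEquiv.symm i))
          * (Matrix.of fun k i : Fin (d + d) =>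
              Sum.elim (fun a => v (finSumFinEquiv (Sum.inr a)) ^ (k : ℕ))
                (fun a => (k : ℕ) * v (finSumFinEquiv (Sum.inr a)) ^ ((k : ℕ) - 1))
                (finSumFinEquiv.symm i)) k i := by
    ext k i
    simp only [Matrix.of_apply]
    exact hentry k i
  rw [hM, Matrix.det_mul_row]
  rw [aux_confluent d (fun a => v (finSumFinEquiv (Sum.inr a)))]
  have hprod1 : (∏ i : Fin (d + d),
      Sum.elim (fun _ => (1:ℝ)) (fun j => v (finSumFinEquiv (Sum.inl j))) (finSumFinEquiv.symm i))
      = ∏ j : Fin d, v (finSumFinEquiv (Sum.inl j)) := by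
    rw [← Equiv.prod_comp (finSumFinEquiv (m := d) (n := d))]
    simp [Fintype.prod_sum_type]
  rw [hprod1]
  have hprod2 : (∏ p ∈ univ.filter (fun p : Fin d × Fin d => p.1 < p.2),
        (v (finSumFinEquiv (Sum.inr p.1)) - v (finSumFinEquiv (Sum.inr p.2))) ^ 4)
      = (∏ p ∈ univ.filter (fun p : Fin d × Fin d => p.1 < p.2),
          (v (finSumFinEquiv (Sum.inr p.2)) - v (finSumFinEquiv (Sum.inr p.1)))) ^ 4 := by
    rw [← Finset.prod_pow]
    exact Finset.prod_congr rfl fun p _ => by ring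
  rw [hprod2]
  ring
end

section
/- Let d ≥ 1 and let φ : ℝ^{2d} → ℝ^{2d} be the map φ(π₁,…,π_d,h₁,…,h_d) = (Σ_{j=1}^d π_j, Σ_{j=1}^d π_j h_j, Σ_{j=1}^d π_j h_j², …, Σ_{j=1}^d π_j h_j^{2d−1}). Then φ is injective on the set {(π₁,…,π_d,h₁,…,h_d) : π_i > 0 for all i, and h₁ < h₂ < … < h_d}. -/
open Finset

lemma weight_sum (d : ℕ) (π h : Fin d → ℝ) (S : Finset ℝ)
    (hS : ∀ j, h j ∈ S) (f : ℝ → ℝ) :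
    ∑ x ∈ S, (∑ j, if h j = x then π j else 0) * f x = ∑ j, π j * f (h j) := by
  simp_rw [Finset.sum_mul, ite_mul, zero_mul]
  rw [Finset.sum_comm]
  refine Finset.sum_congr rfl fun j _ => ?_
  rw [Finset.sum_ite_eq S (h j) (fun x => π j * f x)]
  simp [hS j]

/-- the moment map `φ(π,h) = (Σπ_j h_j^k)_{k=0,…,2d-1}` is injective on the
set of positive weights and strictly increasing support points. -/
theorem stmt_8 (d : ℕ) (hd : 1 ≤ d) :
    Set.InjOn
      (fun p : (Fin d → ℝ) × (Fin d → ℝ) =>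
        fun k : Fin (2 * d) => ∑ j, p.1 j * p.2 j ^ (k : ℕ))
      {p : (Fin d → ℝ) × (Fin d → ℝ) | (∀ i, 0 < p.1 i) ∧ StrictMono p.2} := by
  rintro ⟨π, h⟩ ⟨hπ, hh⟩ ⟨π', h'⟩ ⟨hπ', hh'⟩ heq
  -- equal moments for k < 2d
  have hmom : ∀ k < 2 * d, ∑ j, π j * h j ^ k = ∑ j, π' j * h' j ^ k := by
    intro k hk
    exact congrFun heq ⟨k, hk⟩
  -- combined support
  set S : Finset ℝ := Finset.image h Finset.univ ∪ Finset.image h' Finset.univ with hSdef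
  have hhS : ∀ j, h j ∈ S := fun j => Finset.mem_union_left _ (Finset.mem_image_of_mem h (Finset.mem_univ j))
  have hh'S : ∀ j, h' j ∈ S := fun j => Finset.mem_union_right _ (Finset.mem_image_of_mem h' (Finset.mem_univ j))
  have hScard : S.card ≤ 2 * d := by
    calc S.card ≤ (Finset.image h Finset.univ).card + (Finset.image h' Finset.univ).card :=
          Finset.card_union_le _ _
      _ ≤ d + d := by
          gcongr <;> simpa using (Finset.card_image_le.trans (by simp))
      _ = 2 * d := (two_mul d).symm
  set c : ℝ → ℝ := fun x => (∑ j, if h j = x then π j else 0) - (∑ j, if h' j = x then π' j else 0)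
    with hcdef
  -- for any polynomial of natDegree < 2d, the signed sums agree
  have hpoly : ∀ p : Polynomial ℝ, p.natDegree < 2 * d →
      ∑ j, π j * p.eval (h j) = ∑ j, π' j * p.eval (h' j) := by
    intro p hp
    have hev : ∀ x : ℝ, p.eval x = ∑ k ∈ Finset.range (2 * d), p.coeff k * x ^ k := fun x =>
      Polynomial.eval_eq_sum_range' hp x
    simp_rw [hev]
    have key : ∀ (π₁ h₁ : Fin d → ℝ), ∑ j, π₁ j * ∑ k ∈ Finset.range (2 * d), p.coeff k * h₁ j ^ k
        = ∑ k ∈ Finset.range (2 * d), p.coeff k * ∑ j, π₁ j * h₁ j ^ k := by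
      intro π₁ h₁
      simp_rw [Finset.mul_sum]
      rw [Finset.sum_comm]
      exact Finset.sum_congr rfl fun k _ => Finset.sum_congr rfl fun j _ => by ring
    rw [key π h, key π' h']
    exact Finset.sum_congr rfl fun k hk => by rw [hmom k (Finset.mem_range.mp hk)]
  -- c vanishes on S via Lagrange basis
  have hczero : ∀ x ∈ S, c x = 0 := by
    intro x hx
    have hinj : Set.InjOn (id : ℝ → ℝ) S := Function.injective_id.injOn
    have hdeg : (Lagrange.basis S id x).natDegree < 2 * d := by
      rw [Lagrange.natDegree_basis hinj hx]
      have : 1 ≤ S.card := Finset.card_pos.mpr ⟨x, hx⟩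
      omega
    have := hpoly _ hdeg
    rw [← weight_sum d π h S hhS (fun y => Polynomial.eval y (Lagrange.basis S id x)),
        ← weight_sum d π' h' S hh'S (fun y => Polynomial.eval y (Lagrange.basis S id x))] at this
    have hδ : ∀ y ∈ S, (Lagrange.basis S id x).eval (id y) = if y = x then 1 else 0 := by
      intro y hy
      split_ifs with hyx
      · subst hyx; exact Lagrange.eval_basis_self hinj hx
      · exact Lagrange.eval_basis_of_ne (fun e => hyx e.symm) hy
    simp only [id] at hδ
    have hterm : ∀ w : ℝ → ℝ,
        ∑ y ∈ S, w y * Polynomial.eval y (Lagrange.basis S id x) = w x := by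
      intro w
      rw [Finset.sum_congr rfl (fun y hy => by rw [hδ y hy])]
      simp_rw [mul_ite, mul_one, mul_zero]
      rw [Finset.sum_ite_eq' S x w]
      simp [hx]
    rw [hterm, hterm] at this
    simpa [hcdef, sub_eq_zero] using this
  -- at h j, weight of μ is π j
  have hwμ : ∀ j, (∑ i, if h i = h j then π i else 0) = π j := by
    intro j
    rw [Finset.sum_eq_single j]
    · simp
    · intro i _ hij
      rw [if_neg (fun e => hij (hh.injective e))]
    · simp
  have hwν : ∀ j, (∑ i, if h' i = h' j then π' i else 0) = π' j := by
    intro j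
    rw [Finset.sum_eq_single j]
    · simp
    · intro i _ hij
      rw [if_neg (fun e => hij (hh'.injective e))]
    · simp
  -- range h ⊆ range h'
  have hsub : ∀ (π₁ π₂ : Fin d → ℝ) (h₁ h₂ : Fin d → ℝ), (∀ i, 0 < π₁ i) →
      (∀ j, (∑ i, if h₁ i = h₁ j then π₁ i else 0) = π₁ j) →
      (∀ x ∈ S, (∑ i, if h₁ i = x then π₁ i else 0) - (∑ i, if h₂ i = x then π₂ i else 0) = 0) →
      (∀ j, h₁ j ∈ S) →
      ∀ j, ∃ i, h₂ i = h₁ j := by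
    intro π₁ π₂ h₁ h₂ hpos hw hc hmem j
    by_contra hcon
    push_neg at hcon
    have := hc (h₁ j) (hmem j)
    rw [hw j] at this
    have h0 : (∑ i, if h₂ i = h₁ j then π₂ i else 0) = 0 := by
      rw [Finset.sum_eq_zero]
      intro i _
      simp [hcon i]
    rw [h0, sub_zero] at this
    exact (hpos j).ne' this
  have hc' : ∀ x ∈ S, (∑ i, if h' i = x then π' i else 0) - (∑ i, if h i = x then π i else 0) = 0 := by
    intro x hx
    have := hczero x hx
    simp only [hcdef] at this
    linarith
  have h12 := hsub π π' h h' hπ hwμ (fun x hx => by simpa [hcdef] using hczero x hx) hhS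
  have h21 := hsub π' π h' h hπ' hwν hc' hh'S
  -- ranges equal, so h = h'
  have hrange : Finset.image h Finset.univ = Finset.image h' Finset.univ := by
    apply Finset.Subset.antisymm
    · intro x hx
      obtain ⟨j, _, rfl⟩ := Finset.mem_image.mp hx
      obtain ⟨i, hi⟩ := h12 j
      exact Finset.mem_image.mpr ⟨i, Finset.mem_univ i, hi⟩
    · intro x hx
      obtain ⟨j, _, rfl⟩ := Finset.mem_image.mp hx
      obtain ⟨i, hi⟩ := h21 j
      exact Finset.mem_image.mpr ⟨i, Finset.mem_univ i, hi⟩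
  have hcard : (Finset.image h Finset.univ).card = d := by
    rw [Finset.card_image_of_injective _ hh.injective, Finset.card_univ, Fintype.card_fin]
  have hcard' : (Finset.image h' Finset.univ).card = d := by
    rw [Finset.card_image_of_injective _ hh'.injective, Finset.card_univ, Fintype.card_fin]
  have hhe : h = h' := by
    have e1 := Finset.orderEmbOfFin_unique hcard
      (fun x => Finset.mem_image_of_mem h (Finset.mem_univ x)) hh
    have e2 := Finset.orderEmbOfFin_unique hcard
      (fun x => hrange ▸ Finset.mem_image_of_mem h' (Finset.mem_univ x)) hh'
    exact e1.trans e2.symm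
  have hπe : π = π' := by
    funext j
    have := hczero (h j) (hhS j)
    simp only [hcdef] at this
    rw [hwμ j, ← hhe] at this
    have h2 : (∑ i, if h i = h j then π' i else 0) = π' j := by
      rw [Finset.sum_eq_single j]
      · simp
      · intro i _ hij
        rw [if_neg (fun e => hij (hh.injective e))]
      · simp
    rw [h2] at this
    linarith
  exact Prod.ext hπe hhe
end

section
/- Let Θ be a compact subset of ℝ, ε > 0, and fix positive integers j, d₁,…,d_j with Σ_{i=1}^j d_i = d. Then there exist constants c > 0 and C > 0 such that for every ε-separated vector (θ₁,…,θ_j) ∈ Θ^j (meaning |θ_i − θ_{i'}| ≥ ε for all i ≠ i') and every vector Λ ∈ ℝ^d, c‖Λ‖ ≤ ‖A(θ₁,…,θ_j) Λ‖ ≤ C‖Λ‖, where ‖·‖ is the Euclidean norm on ℝ^d. -/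
open Finset Polynomial

noncomputable def Amat (j : ℕ) (dv : Fin j → ℕ) (D : ℕ) (θ : Fin j → ℝ) :
    Matrix (Fin D) ((i : Fin j) × Fin (dv i)) ℝ :=
  Matrix.of fun (k : Fin D) (c' : (i : Fin j) × Fin (dv i)) =>
    if (c'.2 : ℕ) ≤ (k : ℕ)
    then θ c'.1 ^ ((k : ℕ) - (c'.2 : ℕ)) / Nat.factorial ((k : ℕ) - (c'.2 : ℕ))
    else 0

lemma crude {n m : Type*} [Fintype n] [Fintype m] (N : Matrix n m ℝ) (R : ℝ) (hR : 0 ≤ R)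
    (hN : ∀ a b, |N a b| ≤ R) (v : m → ℝ) :
    Real.sqrt (∑ a, (N.mulVec v a) ^ 2) ≤
      R * ((Fintype.card n : ℝ) * (Fintype.card m : ℝ)) * Real.sqrt (∑ b, v b ^ 2) := by
  set S := ∑ b, v b ^ 2 with hSdef
  have hS : 0 ≤ S := Finset.sum_nonneg fun _ _ => sq_nonneg _
  have key : ∀ a, (N.mulVec v a) ^ 2 ≤ R ^ 2 * (Fintype.card m : ℝ) * S := by
    intro a
    have h1 : |N.mulVec v a| ≤ R * ∑ b, |v b| := by
      calc |∑ b, N a b * v b| ≤ ∑ b, |N a b * v b| := Finset.abs_sum_le_sum_abs _ _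
        _ ≤ ∑ b, R * |v b| := Finset.sum_le_sum fun b _ => by
              rw [abs_mul]; exact mul_le_mul_of_nonneg_right (hN a b) (abs_nonneg _)
        _ = R * ∑ b, |v b| := by rw [Finset.mul_sum]
    have h2 : (N.mulVec v a) ^ 2 ≤ (R * ∑ b, |v b|) ^ 2 := by
      rw [← sq_abs]
      exact pow_le_pow_left₀ (abs_nonneg _) h1 2
    refine h2.trans ?_
    have h3 : (∑ b, |v b|) ^ 2 ≤ (Fintype.card m : ℝ) * S := by
      have := sq_sum_le_card_mul_sum_sq (s := (Finset.univ : Finset m))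
        (f := fun b => |v b|)
      simpa [sq_abs, hSdef, Finset.card_univ] using this
    calc (R * ∑ b, |v b|) ^ 2 = R ^ 2 * (∑ b, |v b|) ^ 2 := by ring
      _ ≤ R ^ 2 * ((Fintype.card m : ℝ) * S) := mul_le_mul_of_nonneg_left h3 (sq_nonneg R)
      _ = R ^ 2 * (Fintype.card m : ℝ) * S := by ring
  have hsum : ∑ a, (N.mulVec v a) ^ 2 ≤
      (Fintype.card n : ℝ) * (R ^ 2 * (Fintype.card m : ℝ) * S) := by
    calc ∑ a, (N.mulVec v a) ^ 2 ≤ ∑ _a : n, R ^ 2 * (Fintype.card m : ℝ) * S :=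
          Finset.sum_le_sum fun a _ => key a
      _ = (Fintype.card n : ℝ) * (R ^ 2 * (Fintype.card m : ℝ) * S) := by
          rw [Finset.sum_const, nsmul_eq_mul, Finset.card_univ]
  have hcc : ((Fintype.card n : ℝ) * (Fintype.card m : ℝ)) ≤
      ((Fintype.card n : ℝ) * (Fintype.card m : ℝ)) ^ 2 := by
    have : (Fintype.card n * Fintype.card m : ℕ) ≤ (Fintype.card n * Fintype.card m : ℕ) ^ 2 :=
      Nat.le_self_pow two_ne_zero _
    exact_mod_cast this
  have hle2 : (Fintype.card n : ℝ) * (R ^ 2 * (Fintype.card m : ℝ) * S) ≤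
      (R * ((Fintype.card n : ℝ) * (Fintype.card m : ℝ))) ^ 2 * S := by
    calc (Fintype.card n : ℝ) * (R ^ 2 * (Fintype.card m : ℝ) * S)
        = R ^ 2 * S * ((Fintype.card n : ℝ) * (Fintype.card m : ℝ)) := by ring
      _ ≤ R ^ 2 * S * ((Fintype.card n : ℝ) * (Fintype.card m : ℝ)) ^ 2 :=
          mul_le_mul_of_nonneg_left hcc (by positivity)
      _ = (R * ((Fintype.card n : ℝ) * (Fintype.card m : ℝ))) ^ 2 * S := by ring
  calc Real.sqrt (∑ a, (N.mulVec v a) ^ 2)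
      ≤ Real.sqrt ((R * ((Fintype.card n : ℝ) * (Fintype.card m : ℝ))) ^ 2 * S) :=
        Real.sqrt_le_sqrt (hsum.trans hle2)
    _ = R * ((Fintype.card n : ℝ) * (Fintype.card m : ℝ)) * Real.sqrt S := by
        rw [Real.sqrt_mul (by positivity), Real.sqrt_sq (by positivity)]

lemma vecMul_Amat_eq_zero {j D : ℕ} (hj : 1 ≤ j) {dv : Fin j → ℕ} (hdv : ∀ i, 1 ≤ dv i)
    (hD : ∑ i, dv i = D) {θ : Fin j → ℝ} (hθ : Function.Injective θ)
    {μ : Fin D → ℝ} (h : Matrix.vecMul μ (Amat j dv D θ) = 0) : μ = 0 := by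
  have hD1 : 1 ≤ D := by
    calc 1 ≤ j := hj
      _ = ∑ _i : Fin j, 1 := by simp
      _ ≤ ∑ i, dv i := Finset.sum_le_sum fun i _ => hdv i
      _ = D := hD
  set g : ℝ[X] := ∑ k : Fin D, C (μ k / Nat.factorial (k : ℕ)) * X ^ (k : ℕ) with hgdef
  have hg_eval : ∀ (ℓ : ℕ) (t : ℝ), (derivative^[ℓ] g).eval t
      = ∑ k : Fin D, μ k *
          (if ℓ ≤ (k : ℕ) then t ^ ((k : ℕ) - ℓ) / Nat.factorial ((k : ℕ) - ℓ) else 0) := by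
    intro ℓ t
    rw [hgdef, iterate_derivative_sum]
    rw [eval_finset_sum]
    refine Finset.sum_congr rfl fun k _ => ?_
    rw [iterate_derivative_C_mul, iterate_derivative_X_pow_eq_C_mul]
    by_cases hc : ℓ ≤ (k : ℕ)
    · rw [if_pos hc]
      have hfac : ((Nat.factorial ((k : ℕ) - ℓ) : ℝ)) * (Nat.descFactorial (k : ℕ) ℓ : ℝ)
          = (Nat.factorial (k : ℕ) : ℝ) := by
        exact_mod_cast congrArg (Nat.cast : ℕ → ℝ) (Nat.factorial_mul_descFactorial hc)
      have h0 : (Nat.factorial (k : ℕ) : ℝ) ≠ 0 := Nat.cast_ne_zero.2 (Nat.factorial_ne_zero _)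
      have h1 : (Nat.factorial ((k : ℕ) - ℓ) : ℝ) ≠ 0 := Nat.cast_ne_zero.2 (Nat.factorial_ne_zero _)
      simp only [eval_mul, eval_C, eval_pow, eval_X]
      field_simp
      linear_combination (μ k * t ^ ((k : ℕ) - ℓ)) * hfac
    · rw [if_neg hc]
      have : Nat.descFactorial (k : ℕ) ℓ = 0 :=
        Nat.descFactorial_eq_zero_iff_lt.2 (lt_of_not_ge hc)
      simp [this]
  have hroot : ∀ (i : Fin j) (ℓ : Fin (dv i)), (derivative^[(ℓ : ℕ)] g).eval (θ i) = 0 := by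
    intro i ℓ
    have := congrFun h ⟨i, ℓ⟩
    simp only [Matrix.vecMul, dotProduct, Pi.zero_apply] at this
    rw [hg_eval]
    calc (∑ k : Fin D, μ k *
          (if (ℓ : ℕ) ≤ (k : ℕ) then θ i ^ ((k : ℕ) - (ℓ : ℕ)) / Nat.factorial ((k : ℕ) - (ℓ : ℕ)) else 0))
        = ∑ k : Fin D, μ k * Amat j dv D θ k ⟨i, ℓ⟩ :=
          Finset.sum_congr rfl fun k _ => by simp [Amat]
      _ = 0 := this
  have hgzero : g = 0 := by
    by_contra hne
    have hdvd : ∀ i : Fin j, (X - C (θ i)) ^ (dv i) ∣ g := by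
      intro i
      have hlt : dv i - 1 < g.rootMultiplicity (θ i) :=
        lt_rootMultiplicity_of_isRoot_iterate_derivative hne fun m hm =>
          hroot i ⟨m, by have := hdv i; omega⟩
      exact dvd_trans (pow_dvd_pow _ (by have := hdv i; omega))
        (Polynomial.pow_rootMultiplicity_dvd g (θ i))
    have hcop : Pairwise (Function.onFun IsCoprime fun i : Fin j => (X - C (θ i)) ^ (dv i)) :=
      fun i i' hii => ((Polynomial.pairwise_coprime_X_sub_C hθ) hii).pow
    have hprod : (∏ i, (X - C (θ i)) ^ (dv i)) ∣ g := Fintype.prod_dvd_of_coprime hcop hdvd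
    have hdeg : (∏ i, (X - C (θ i)) ^ (dv i)).natDegree = D := by
      rw [Polynomial.natDegree_prod _ _ fun i _ => pow_ne_zero _ (Polynomial.X_sub_C_ne_zero (θ i))]
      simp [Polynomial.natDegree_pow, Polynomial.natDegree_X_sub_C, hD]
    have h1 : D ≤ g.natDegree := hdeg ▸ Polynomial.natDegree_le_of_dvd hprod hne
    have h2 : g.natDegree ≤ D - 1 := by
      refine Polynomial.natDegree_sum_le_of_forall_le _ _ fun k _ => ?_
      refine (Polynomial.natDegree_C_mul_le _ _).trans ?_
      rw [Polynomial.natDegree_X_pow]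
      have := k.isLt
      omega
    omega
  funext k₀
  have hco := congrArg (fun p => Polynomial.coeff p (k₀ : ℕ)) hgzero
  simp only [hgdef, Polynomial.finset_sum_coeff, Polynomial.coeff_C_mul,
    Polynomial.coeff_X_pow, Polynomial.coeff_zero, mul_ite, mul_one, mul_zero] at hco
  simp only [Fin.val_eq_val, Finset.sum_ite_eq, Finset.mem_univ, if_true] at hco
  have h0 : (Nat.factorial (k₀ : ℕ) : ℝ) ≠ 0 := Nat.cast_ne_zero.2 (Nat.factorial_ne_zero _)
  have : μ k₀ = 0 := by
    field_simp at hco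
    simpa using hco
  simpa using this

lemma isUnit_Bmat {j D : ℕ} (hj : 1 ≤ j) {dv : Fin j → ℕ} (hdv : ∀ i, 1 ≤ dv i)
    (hD : ∑ i, dv i = D) {θ : Fin j → ℝ} (hθ : Function.Injective θ)
    (e : ((i : Fin j) × Fin (dv i)) ≃ Fin D) :
    IsUnit ((Amat j dv D θ).submatrix e id) := by
  rw [← Matrix.vecMul_injective_iff_isUnit]
  intro ν₁ ν₂ hv
  dsimp only at hv
  have h0 : Matrix.vecMul (ν₁ - ν₂) ((Amat j dv D θ).submatrix e id) = 0 := by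
    rw [Matrix.sub_vecMul, hv, sub_self]
  have hz : Matrix.vecMul ((ν₁ - ν₂) ∘ e.symm) (Amat j dv D θ) = 0 := by
    funext c
    have hs : ∑ a : (i : Fin j) × Fin (dv i),
          ((ν₁ - ν₂) ∘ e.symm) (e a) * Amat j dv D θ (e a) c
        = ∑ k, ((ν₁ - ν₂) ∘ e.symm) k * Amat j dv D θ k c :=
      Equiv.sum_comp e (fun k => ((ν₁ - ν₂) ∘ e.symm) k * Amat j dv D θ k c)
    have h0c := congrFun h0 c
    simp only [Matrix.vecMul, dotProduct, Matrix.submatrix_apply, id,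
      Pi.zero_apply] at h0c ⊢
    rw [← hs]
    simpa using h0c
  have hzero := vecMul_Amat_eq_zero hj hdv hD hθ hz
  funext a
  have := congrFun hzero (e a)
  simp only [Function.comp_apply, Equiv.symm_apply_apply, Pi.zero_apply, Pi.sub_apply] at this
  linarith

/-- Corollary: uniform bounds for `ε`-separated support points:
there are constants `0 < c`, `0 < C` such that for every `ε`-separated `(θ₁,…,θⱼ) ∈ Θ^j`
and every `Λ ∈ ℝ^d`, `c‖Λ‖ ≤ ‖A(θ₁,…,θⱼ)Λ‖ ≤ C‖Λ‖` in Euclidean norm. -/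
theorem stmt_10 (Θ : Set ℝ) (hΘ : IsCompact Θ) (ε : ℝ) (hε : 0 < ε)
    (j : ℕ) (hj : 1 ≤ j) (dv : Fin j → ℕ) (hdv : ∀ i, 1 ≤ dv i)
    (D : ℕ) (hD : ∑ i, dv i = D) :
    ∃ c C : ℝ, 0 < c ∧ 0 < C ∧
      ∀ θ : Fin j → ℝ, (∀ i, θ i ∈ Θ) →
        (∀ i i', i ≠ i' → ε ≤ |θ i - θ i'|) →
        ∀ Λ : ((i : Fin j) × Fin (dv i)) → ℝ,
          c * Real.sqrt (∑ i, Λ i ^ 2) ≤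
            Real.sqrt (∑ k, ((Matrix.of fun (k : Fin D) (c' : (i : Fin j) × Fin (dv i)) =>
              if (c'.2 : ℕ) ≤ (k : ℕ)
              then θ c'.1 ^ ((k : ℕ) - (c'.2 : ℕ)) / Nat.factorial ((k : ℕ) - (c'.2 : ℕ))
              else 0).mulVec Λ k) ^ 2) ∧
          Real.sqrt (∑ k, ((Matrix.of fun (k : Fin D) (c' : (i : Fin j) × Fin (dv i)) =>
              if (c'.2 : ℕ) ≤ (k : ℕ)
              then θ c'.1 ^ ((k : ℕ) - (c'.2 : ℕ)) / Nat.factorial ((k : ℕ) - (c'.2 : ℕ))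
              else 0).mulVec Λ k) ^ 2) ≤
            C * Real.sqrt (∑ i, Λ i ^ 2) := by
  classical
  have hD1 : 1 ≤ D := by
    calc 1 ≤ j := hj
      _ = ∑ _i : Fin j, 1 := by simp
      _ ≤ ∑ i, dv i := Finset.sum_le_sum fun i _ => hdv i
      _ = D := hD
  have hcard : Fintype.card ((i : Fin j) × Fin (dv i)) = D := by
    simp [Fintype.card_sigma, hD]
  let e : ((i : Fin j) × Fin (dv i)) ≃ Fin D := Fintype.equivFinOfCardEq hcard
  -- upper bound constant
  obtain ⟨R₀, hR₀⟩ := hΘ.isBounded.exists_norm_le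
  set E : ℝ := max R₀ 1 ^ D with hEdef
  have hE1 : (1 : ℝ) ≤ E := one_le_pow₀ (le_max_right _ _)
  have hEbound : ∀ θ : Fin j → ℝ, (∀ i, θ i ∈ Θ) →
      ∀ (k : Fin D) (c' : (i : Fin j) × Fin (dv i)), |Amat j dv D θ k c'| ≤ E := by
    intro θ hmem k c'
    show |if (c'.2 : ℕ) ≤ (k : ℕ) then _ else (0:ℝ)| ≤ E
    split_ifs with hc
    · rw [abs_div, abs_pow, Nat.abs_cast]
      have hθb : |θ c'.1| ≤ max R₀ 1 := le_trans (hR₀ _ (hmem c'.1)) (le_max_left _ _)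
      have h1 : |θ c'.1| ^ ((k : ℕ) - (c'.2 : ℕ)) ≤ max R₀ 1 ^ ((k : ℕ) - (c'.2 : ℕ)) :=
        pow_le_pow_left₀ (abs_nonneg _) hθb _
      have h2 : max R₀ 1 ^ ((k : ℕ) - (c'.2 : ℕ)) ≤ E := by
        rw [hEdef]
        exact pow_le_pow_right₀ (le_max_right _ _) (by omega)
      have h3 : (1 : ℝ) ≤ (Nat.factorial ((k : ℕ) - (c'.2 : ℕ)) : ℝ) := by
        exact_mod_cast Nat.one_le_iff_ne_zero.2 (Nat.factorial_ne_zero _)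
      calc |θ c'.1| ^ ((k : ℕ) - (c'.2 : ℕ)) / (Nat.factorial ((k : ℕ) - (c'.2 : ℕ)) : ℝ)
          ≤ |θ c'.1| ^ ((k : ℕ) - (c'.2 : ℕ)) / 1 := by
            apply div_le_div_of_nonneg_left ?_ ?_ h3  -- might be wrong lemma direction
            · positivity
            · norm_num
        _ = |θ c'.1| ^ ((k : ℕ) - (c'.2 : ℕ)) := by ring
        _ ≤ E := h1.trans h2
    · simpa using le_trans zero_le_one hE1
  set Cc : ℝ := E * ((D : ℝ) * (D : ℝ)) with hCcdef
  have hCcpos : 0 < Cc := by positivity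
  have hupper : ∀ θ : Fin j → ℝ, (∀ i, θ i ∈ Θ) →
      ∀ Λ : ((i : Fin j) × Fin (dv i)) → ℝ,
      Real.sqrt (∑ k, ((Amat j dv D θ).mulVec Λ k) ^ 2) ≤ Cc * Real.sqrt (∑ i, Λ i ^ 2) := by
    intro θ hmem Λ
    have := crude (Amat j dv D θ) E (le_trans zero_le_one hE1) (hEbound θ hmem) Λ
    simpa [hCcdef, hcard, Fintype.card_fin] using this
  -- the compact set K
  set K : Set (Fin j → ℝ) :=
    {θ | (∀ i, θ i ∈ Θ) ∧ ∀ i i', i ≠ i' → ε ≤ |θ i - θ i'|} with hKdef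
  by_cases hK : K.Nonempty
  swap
  · refine ⟨1, Cc + 1, one_pos, by positivity, ?_⟩
    intro θ h1 h2
    exact absurd ⟨h1, h2⟩ (fun hmem => hK ⟨θ, hmem⟩)
  have hKsub : K ⊆ Set.pi Set.univ (fun _ : Fin j => Θ) := by
    intro θ hθ i _
    exact hθ.1 i
  have hKclosed : IsClosed K := by
    have h1 : IsClosed {θ : Fin j → ℝ | ∀ i, θ i ∈ Θ} := by
      have he : {θ : Fin j → ℝ | ∀ i, θ i ∈ Θ} = Set.pi Set.univ (fun _ => Θ) := by
        ext θ; simp [Set.mem_pi]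
      rw [he]
      exact isClosed_set_pi fun i _ => hΘ.isClosed
    have h2 : IsClosed {θ : Fin j → ℝ | ∀ i i', i ≠ i' → ε ≤ |θ i - θ i'|} := by
      have he : {θ : Fin j → ℝ | ∀ i i', i ≠ i' → ε ≤ |θ i - θ i'|}
          = ⋂ i, ⋂ i', {θ : Fin j → ℝ | i ≠ i' → ε ≤ |θ i - θ i'|} := by
        ext θ; simp [Set.mem_iInter]
      rw [he]
      refine isClosed_iInter fun i => isClosed_iInter fun i' => ?_
      by_cases h : i = i'
      · have he2 : {θ : Fin j → ℝ | i ≠ i' → ε ≤ |θ i - θ i'|} = Set.univ := by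
          ext θ; simp [h]
        rw [he2]; exact isClosed_univ
      · have he2 : {θ : Fin j → ℝ | i ≠ i' → ε ≤ |θ i - θ i'|}
            = {θ : Fin j → ℝ | ε ≤ |θ i - θ i'|} := by
          ext θ; simp [h]
        rw [he2]
        exact isClosed_le continuous_const (((continuous_apply i).sub (continuous_apply i')).abs)
    exact h1.inter h2
  have hKcomp : IsCompact K :=
    (isCompact_univ_pi fun _ => hΘ).of_isClosed_subset hKclosed hKsub
  -- injectivity on K
  have hθinj : ∀ θ ∈ K, Function.Injective θ := by
    intro θ hθ i i' hii
    by_contra hne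
    have := hθ.2 i i' hne
    rw [hii, sub_self, abs_zero] at this
    linarith
  set B : (Fin j → ℝ) → Matrix ((i : Fin j) × Fin (dv i)) ((i : Fin j) × Fin (dv i)) ℝ :=
    fun θ => (Amat j dv D θ).submatrix e id with hBdef
  have hBunit : ∀ θ ∈ K, IsUnit (B θ) := fun θ hθ =>
    isUnit_Bmat hj hdv hD (hθinj θ hθ) e
  have hBcont : Continuous B := by
    apply continuous_matrix
    intro a b
    show Continuous fun θ : Fin j → ℝ => Amat j dv D θ (e a) b
    simp only [Amat, Matrix.of_apply]
    split_ifs with hc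
    · exact ((continuous_apply b.1).pow _).div_const _
    · exact continuous_const
  have hdetne : ∀ θ ∈ K, (B θ).det ≠ 0 := by
    intro θ hθ
    exact ((Matrix.isUnit_iff_isUnit_det _).mp (hBunit θ hθ)).ne_zero
  set F : (Fin j → ℝ) → ℝ := fun θ => ∑ a, ∑ b, |(B θ)⁻¹ a b| with hFdef
  have hFcont : ContinuousOn F K := by
    apply continuousOn_finset_sum
    intro a _
    apply continuousOn_finset_sum
    intro b _
    have heq : ∀ θ, (B θ)⁻¹ a b = ((B θ).det)⁻¹ * (B θ).adjugate a b := by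
      intro θ
      rw [Matrix.inv_def, Ring.inverse_eq_inv']
      simp [Matrix.smul_apply, smul_eq_mul]
    simp only [heq]
    exact ((hBcont.matrix_det.continuousOn.inv₀ hdetne).mul
      ((hBcont.matrix_adjugate.matrix_elem a b).continuousOn)).abs
  obtain ⟨θ₀, hθ₀K, hmax⟩ := hKcomp.exists_isMaxOn hK hFcont
  set R' : ℝ := max (F θ₀) 1 with hR'def
  have hR'pos : (0 : ℝ) < R' := lt_of_lt_of_le one_pos (le_max_right _ _)
  set cc : ℝ := (R' * ((D : ℝ) * (D : ℝ)))⁻¹ with hccdef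
  have hccpos : 0 < cc := by positivity
  refine ⟨cc, Cc, hccpos, hCcpos, ?_⟩
  intro θ hmem hsep Λ
  have hθK : θ ∈ K := ⟨hmem, hsep⟩
  constructor
  · -- lower bound
    have hBu := hBunit θ hθK
    have hdet : IsUnit (B θ).det := (Matrix.isUnit_iff_isUnit_det _).mp hBu
    have hinvB : (B θ)⁻¹ * (B θ) = 1 := Matrix.nonsing_inv_mul _ hdet
    have hΛ : (B θ)⁻¹.mulVec ((B θ).mulVec Λ) = Λ := by
      rw [Matrix.mulVec_mulVec, hinvB, Matrix.one_mulVec]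
    have hinvbound : ∀ a b, |(B θ)⁻¹ a b| ≤ R' := by
      intro a b
      calc |(B θ)⁻¹ a b| ≤ ∑ b', |(B θ)⁻¹ a b'| :=
            Finset.single_le_sum (f := fun b' => |(B θ)⁻¹ a b'|)
              (fun b' _ => abs_nonneg _) (Finset.mem_univ b)
        _ ≤ F θ := Finset.single_le_sum
            (f := fun a' => ∑ b', |(B θ)⁻¹ a' b'|)
            (fun a' _ => Finset.sum_nonneg fun b' _ => abs_nonneg _)
            (Finset.mem_univ a)
        _ ≤ F θ₀ := hmax hθK
        _ ≤ R' := le_max_left _ _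
    have hcr := crude ((B θ)⁻¹) R' (le_of_lt hR'pos) hinvbound ((B θ).mulVec Λ)
    rw [hΛ] at hcr
    have hBsum : ∑ a, ((B θ).mulVec Λ a) ^ 2 = ∑ k, ((Amat j dv D θ).mulVec Λ k) ^ 2 := by
      have : ∀ a, (B θ).mulVec Λ a = (Amat j dv D θ).mulVec Λ (e a) := by
        intro a
        simp [hBdef, Matrix.mulVec, dotProduct, Matrix.submatrix_apply]
      simp only [this]
      exact Equiv.sum_comp e (fun k => ((Amat j dv D θ).mulVec Λ k) ^ 2)
    rw [hBsum] at hcr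
    rw [hccdef, inv_mul_le_iff₀ (by positivity)]
    calc Real.sqrt (∑ i, Λ i ^ 2)
        ≤ R' * ((Fintype.card ((i : Fin j) × Fin (dv i)) : ℝ) *
            (Fintype.card ((i : Fin j) × Fin (dv i)) : ℝ)) *
          Real.sqrt (∑ k, ((Amat j dv D θ).mulVec Λ k) ^ 2) := hcr
      _ = R' * ((D : ℝ) * (D : ℝ)) * Real.sqrt (∑ k, ((Amat j dv D θ).mulVec Λ k) ^ 2) := by
          rw [hcard]
  · exact hupper θ hmem Λ
end

section
/- For each n and each u ∈ ℝ let f_{n,u} be a probability density with respect to a σ-finite measure λ_n, with associated probability measure P_{n,u}, and assume f_{n,0} > 0 λ_n-a.e. Fix u ∈ ℝ and Γ > 0. Suppose there are statistics Z_n (measurable functions on the sample space) such that, with X distributed according to P_{n,0}: (a) the law of Z_n(X) converges weakly to the Gaussian law N(0,Γ); and (b) ln( f_{n,u}(X)/f_{n,0}(X) ) − u Z_n(X) + (u²/2)Γ converges to 0 in P_{n,0}-probability. Then liminf_{n→∞} inf { P_{n,u}(A) : A measurable with P_{n,0}(A) ≥ 3/4 } ≥ (1/4) e^{−u²Γ/2}.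 -/
open MeasureTheory Filter
open scoped ENNReal

open ProbabilityTheory Real
open scoped NNReal Topology


lemma stmt18_gauss_neg {v : ℝ≥0} :
    (gaussianReal 0 v).map (fun x : ℝ => -x) = gaussianReal 0 v := by
  have h := gaussianReal_map_const_mul (μ := 0) (v := v) (-1)
  simp only [neg_one_mul, mul_zero] at h
  rw [h]
  congr 1
  ext
  norm_num

lemma stmt18_half_add {x : ℝ≥0∞} (h : x + x = 1) : x ≤ 1 / 2 := by
  by_contra hc
  push_neg at hc
  have := ENNReal.add_lt_add hc hc
  rw [h, ENNReal.add_halves] at this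
  exact lt_irrefl _ this

lemma stmt18_gauss_halves {v : ℝ≥0} (hv : v ≠ 0) :
    gaussianReal 0 v (Set.Iic 0) ≤ 1 / 2 ∧ gaussianReal 0 v (Set.Ici 0) ≤ 1 / 2 := by
  have : IsProbabilityMeasure (gaussianReal 0 v) := inferInstance
  set N := gaussianReal 0 v with hN
  have hzero : N {0} = 0 :=
    gaussianReal_absolutelyContinuous 0 hv (measure_singleton 0)
  have hIicIci : N (Set.Iic 0) = N (Set.Ici 0) := by
    calc N (Set.Iic 0) = ((gaussianReal 0 v).map (fun x : ℝ => -x)) (Set.Iic 0) := by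
          rw [stmt18_gauss_neg]
      _ = N (Set.Ici 0) := by
          rw [Measure.map_apply measurable_neg measurableSet_Iic,
            show (fun x : ℝ => -x) ⁻¹' Set.Iic (0:ℝ) = Set.Ici 0 from
              Set.ext fun x => show -x ≤ 0 ↔ 0 ≤ x from neg_nonpos]
  have hIoiIci : N (Set.Ioi 0) = N (Set.Ici 0) := by
    have h1 : Set.Ici (0:ℝ) = Set.Ioi 0 ∪ {0} := by
      ext x; simp [le_iff_lt_or_eq, or_comm, eq_comm]
    rw [h1, measure_union (by simp [Set.disjoint_left]; intro a ha; exact ne_of_gt ha) (measurableSet_singleton 0),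
      hzero, add_zero]
  have hsum : N (Set.Iic 0) + N (Set.Ioi 0) = 1 := by
    have := measure_add_measure_compl (μ := N) (measurableSet_Iic (a := (0:ℝ)))
    rwa [Set.compl_Iic, measure_univ] at this
  have heq : N (Set.Iic 0) + N (Set.Iic 0) = 1 := by
    rw [hsum.symm, hIicIci, ← hIoiIci]
  have h2 := stmt18_half_add heq
  exact ⟨h2, hIicIci ▸ h2⟩

lemma stmt18_gauss_Icc {v : ℝ≥0} (hv : v ≠ 0) (a b : ℝ) :
    gaussianReal 0 v (Set.Icc a b) ≤ ENNReal.ofReal ((b - a) * (Real.sqrt (2 * π * v))⁻¹) := by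
  rw [gaussianReal_apply 0 hv]
  have hb : ∀ x : ℝ, gaussianPDF 0 v x ≤ ENNReal.ofReal ((Real.sqrt (2 * π * v))⁻¹) := by
    intro x
    rw [gaussianPDF]
    apply ENNReal.ofReal_le_ofReal
    rw [gaussianPDFReal]
    calc (√(2 * π * v))⁻¹ * rexp (- (x - 0)^2 / (2 * v)) ≤ (√(2 * π * v))⁻¹ * 1 := by
          gcongr
          · apply Real.exp_le_one_iff.mpr
            apply div_nonpos_of_nonpos_of_nonneg
            · simp [sq_nonneg]
            · positivity
      _ = _ := mul_one _
  calc ∫⁻ x in Set.Icc a b, gaussianPDF 0 v x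
      ≤ ∫⁻ _ in Set.Icc a b, ENNReal.ofReal ((Real.sqrt (2 * π * v))⁻¹) :=
        lintegral_mono fun x => hb x
    _ = ENNReal.ofReal ((Real.sqrt (2 * π * v))⁻¹) * volume (Set.Icc a b) := by
        rw [setLIntegral_const]
    _ ≤ _ := by
        rw [Real.volume_Icc, ← ENNReal.ofReal_mul (by positivity), mul_comm]


lemma stmt18_core {β : Type} [MeasurableSpace β] (lam : Measure β)
    (f0 fu : β → ℝ) (hf0m : Measurable f0) (hfum : Measurable fu) (hfu0 : ∀ x, 0 ≤ fu x)
    (Z : β → ℝ) (u Γ ε : ℝ) (hε : 0 < ε)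
    (A : Set β) (hA : MeasurableSet A)
    (hPA : 3 / 4 ≤ lam.withDensity (fun x => ENNReal.ofReal (f0 x)) A) :
    ENNReal.ofReal (Real.exp (-(u ^ 2 / 2 * Γ) - 2 * ε)) *
      (ENNReal.ofReal (3 / 4) -
        (lam.withDensity (fun x => ENNReal.ofReal (f0 x))
            {x | ε ≤ |Real.log (fu x / f0 x) - u * Z x + u ^ 2 / 2 * Γ|}
          + lam.withDensity (fun x => ENNReal.ofReal (f0 x)) {x | u * Z x ≤ -ε}
          + lam.withDensity (fun x => ENNReal.ofReal (f0 x))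
            {x | u ^ 2 / 2 * Γ - ε ≤ u * Z x ∧ u * Z x ≤ u ^ 2 / 2 * Γ + ε})) ≤
      lam.withDensity (fun x => ENNReal.ofReal (fu x)) A := by
  set P := lam.withDensity (fun x => ENNReal.ofReal (f0 x)) with hPdef
  set c := Real.exp (-(u ^ 2 / 2 * Γ) - 2 * ε) with hcdef
  set S1 := {x | ε ≤ |Real.log (fu x / f0 x) - u * Z x + u ^ 2 / 2 * Γ|} with hS1
  set S2 := {x | u * Z x ≤ -ε} with hS2
  set S3 := {x | u ^ 2 / 2 * Γ - ε ≤ u * Z x ∧ u * Z x ≤ u ^ 2 / 2 * Γ + ε} with hS3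
  set G := {x | ENNReal.ofReal c * ENNReal.ofReal (f0 x) ≤ ENNReal.ofReal (fu x)} with hG
  have hGmeas : MeasurableSet G :=
    measurableSet_le (measurable_const.mul hf0m.ennreal_ofReal) hfum.ennreal_ofReal
  have hcpos : 0 < c := Real.exp_pos _
  -- a.e. positivity of f0 under P
  have hae : ∀ᵐ x ∂P, 0 < f0 x := by
    rw [ae_iff]
    have hset : {x | ¬ 0 < f0 x} = {x | f0 x ≤ 0} := by ext x; simp [not_lt]
    have hms : MeasurableSet {x | f0 x ≤ 0} := measurableSet_le hf0m measurable_const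
    rw [hset, hPdef, withDensity_apply _ hms]
    rw [setLIntegral_congr_fun hms (fun x hx =>
      ENNReal.ofReal_eq_zero.mpr hx)]
    exact lintegral_zero
  -- covering
  have hcover : A ≤ᵐ[P] (((A ∩ G) ∪ (S1 ∪ (S2 ∪ S3)) : Set β)) := by
    filter_upwards [hae] with x hx hxA
    show x ∈ (A ∩ G) ∪ (S1 ∪ (S2 ∪ S3))
    simp only [Set.mem_union, Set.mem_inter_iff, hS1, hS2, hS3, hG, Set.mem_setOf_eq]
    by_cases hGx : ENNReal.ofReal c * ENNReal.ofReal (f0 x) ≤ ENNReal.ofReal (fu x)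
    · exact Or.inl ⟨hxA, hGx⟩
    right
    by_cases h1 : ε ≤ |Real.log (fu x / f0 x) - u * Z x + u ^ 2 / 2 * Γ|
    · exact Or.inl h1
    right
    have h1' := abs_lt.mp (not_le.mp h1)
    have hult : fu x < c * f0 x := by
      by_contra hge
      push_neg at hge
      exact hGx (by
        rw [← ENNReal.ofReal_mul hcpos.le]
        exact ENNReal.ofReal_le_ofReal hge)
    by_cases hfux : fu x = 0
    · right
      rw [hfux, zero_div, Real.log_zero] at h1'
      exact ⟨by linarith [h1'.2], by linarith [h1'.1]⟩
    · left
      have hfupos : 0 < fu x := lt_of_le_of_ne (hfu0 x) (Ne.symm hfux)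
      have hdiv : fu x / f0 x < c := (div_lt_iff₀ hx).mpr hult
      have hlog : Real.log (fu x / f0 x) < -(u ^ 2 / 2 * Γ) - 2 * ε := by
        calc Real.log (fu x / f0 x) < Real.log c :=
              Real.log_lt_log (div_pos hfupos hx) hdiv
          _ = -(u ^ 2 / 2 * Γ) - 2 * ε := by rw [hcdef, Real.log_exp]
      show u * Z x ≤ -ε
      linarith [h1'.1]
  -- measure bound
  have step1 : P A ≤ P (A ∩ G) + (P S1 + P S2 + P S3) := by
    calc P A ≤ P ((A ∩ G) ∪ (S1 ∪ (S2 ∪ S3))) := measure_mono_ae hcover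
      _ ≤ P (A ∩ G) + P (S1 ∪ (S2 ∪ S3)) := measure_union_le _ _
      _ ≤ P (A ∩ G) + (P S1 + P (S2 ∪ S3)) := by
          gcongr
          exact measure_union_le _ _
      _ ≤ P (A ∩ G) + (P S1 + (P S2 + P S3)) := by
          gcongr
          exact measure_union_le _ _
      _ = P (A ∩ G) + (P S1 + P S2 + P S3) := by rw [add_assoc]
  have h34 : ENNReal.ofReal (3 / 4) = (3 / 4 : ℝ≥0∞) := by
    rw [ENNReal.ofReal_div_of_pos (by norm_num)]
    norm_num
  have step2 : ENNReal.ofReal (3 / 4) - (P S1 + P S2 + P S3) ≤ P (A ∩ G) := by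
    rw [h34]
    exact tsub_le_iff_right.mpr (le_trans hPA step1)
  -- integral bound
  have step3 : ENNReal.ofReal c * P (A ∩ G) ≤
      lam.withDensity (fun x => ENNReal.ofReal (fu x)) A := by
    rw [withDensity_apply _ hA, hPdef, withDensity_apply _ (hA.inter hGmeas)]
    calc ENNReal.ofReal c * ∫⁻ x in A ∩ G, ENNReal.ofReal (f0 x) ∂lam
        = ∫⁻ x in A ∩ G, ENNReal.ofReal c * ENNReal.ofReal (f0 x) ∂lam := by
          rw [lintegral_const_mul _ hf0m.ennreal_ofReal]
      _ ≤ ∫⁻ x in A ∩ G, ENNReal.ofReal (fu x) ∂lam := by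
          refine setLIntegral_mono hfum.ennreal_ofReal fun x hx => hx.2
      _ ≤ ∫⁻ x in A, ENNReal.ofReal (fu x) ∂lam :=
          lintegral_mono_set Set.inter_subset_left
  calc ENNReal.ofReal c * (ENNReal.ofReal (3 / 4) - (P S1 + P S2 + P S3))
      ≤ ENNReal.ofReal c * P (A ∩ G) := by gcongr
    _ ≤ _ := step3

/-- contiguity lower bound from LAN at a single `u`: if
`Z_n → N(0,Γ)` in distribution under `P_{n,0}` and the log-likelihood ratio satisfies
`ln(f_{n,u}/f_{n,0})(X) − u Z_n(X) + u²Γ/2 → 0` in `P_{n,0}`-probability, then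
`liminf_n inf {P_{n,u}(A) : P_{n,0}(A) ≥ 3/4} ≥ (1/4) e^{−u²Γ/2}`. -/
theorem stmt_18 (α : ℕ → Type) [∀ n, MeasurableSpace (α n)]
    (lam : (n : ℕ) → Measure (α n)) [∀ n, SigmaFinite (lam n)]
    (f : (n : ℕ) → ℝ → α n → ℝ)
    (hfnn : ∀ n u x, 0 ≤ f n u x)
    (hfmeas : ∀ n u, Measurable (f n u))
    (hprob : ∀ n u, ∫⁻ x, ENNReal.ofReal (f n u x) ∂(lam n) = 1)
    (hpos : ∀ n, ∀ᵐ x ∂(lam n), 0 < f n 0 x)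
    (u Γ : ℝ) (hΓ : 0 < Γ)
    (Z : (n : ℕ) → α n → ℝ) (hZmeas : ∀ n, Measurable (Z n))
    -- (a) `Z_n → N(0,Γ)` in distribution under `P_{n,0}`
    (ha : ∀ φ : BoundedContinuousFunction ℝ ℝ,
      Tendsto
        (fun n => ∫ x, φ (Z n x)
          ∂((lam n).withDensity fun x => ENNReal.ofReal (f n 0 x)))
        atTop
        (nhds (∫ z, φ z ∂(ProbabilityTheory.gaussianReal 0 Γ.toNNReal))))
    -- (b) `ln(f_{n,u}/f_{n,0}) − u Z_n + u²Γ/2 → 0` in `P_{n,0}`-probability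
    (hb : ∀ δ : ℝ, 0 < δ →
      Tendsto
        (fun n => ((lam n).withDensity fun x => ENNReal.ofReal (f n 0 x))
          {x : α n | δ ≤
            |Real.log (f n u x / f n 0 x) - u * Z n x + u ^ 2 / 2 * Γ|})
        atTop (nhds 0)) :
    ENNReal.ofReal (1 / 4 * Real.exp (-(u ^ 2) * Γ / 2)) ≤
      atTop.liminf fun n =>
        sInf {r : ℝ≥0∞ | ∃ A : Set (α n), MeasurableSet A ∧
          3 / 4 ≤ ((lam n).withDensity fun x => ENNReal.ofReal (f n 0 x)) A ∧
          r = ((lam n).withDensity fun x => ENNReal.ofReal (f n u x)) A} := by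
  
  have h34 : ENNReal.ofReal (3 / 4) = (3 / 4 : ℝ≥0∞) := by
    rw [ENNReal.ofReal_div_of_pos (by norm_num)]; norm_num
  haveI hPprob : ∀ n u',
      IsProbabilityMeasure ((lam n).withDensity fun x => ENNReal.ofReal (f n u' x)) :=
    fun n u' => ⟨by
      rw [withDensity_apply _ MeasurableSet.univ, setLIntegral_univ]; exact hprob n u'⟩
  by_cases hu : u = 0
  · -- trivial case: Q = P
    subst hu
    refine le_liminf_of_le (by isBoundedDefault)
      (Eventually.of_forall fun n => le_sInf ?_)
    rintro r ⟨A, hA, hA34, rfl⟩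
    refine le_trans ?_ hA34
    rw [show (1 / 4 : ℝ) * Real.exp (-(0 ^ 2 : ℝ) * Γ / 2) = 1 / 4 by norm_num]
    calc ENNReal.ofReal (1 / 4) ≤ ENNReal.ofReal (3 / 4) :=
          ENNReal.ofReal_le_ofReal (by norm_num)
      _ = 3 / 4 := h34
  -- main case
  have hv : Γ.toNNReal ≠ 0 := by
    simp only [ne_eq, Real.toNNReal_eq_zero, not_le]
    exact hΓ
  have hvΓ : ((Γ.toNNReal : ℝ)) = Γ := Real.coe_toNNReal _ hΓ.le
  set N := gaussianReal 0 Γ.toNNReal with hN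
  haveI hmapprob : ∀ n, IsProbabilityMeasure
      (((lam n).withDensity fun x => ENNReal.ofReal (f n 0 x)).map (Z n)) :=
    fun n => Measure.isProbabilityMeasure_map (hZmeas n).aemeasurable
  let ν : ℕ → ProbabilityMeasure ℝ := fun n =>
    ⟨((lam n).withDensity fun x => ENNReal.ofReal (f n 0 x)).map (Z n), hmapprob n⟩
  have hν : Tendsto ν atTop (𝓝 ⟨N, by rw [hN]; infer_instance⟩) := by
    refine ProbabilityMeasure.tendsto_iff_forall_integral_tendsto.mpr ?_
    intro φ
    have h1 := ha φ
    have h2 : ∀ n, ∫ ω, φ ω ∂(ν n : Measure ℝ)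
        = ∫ x, φ (Z n x) ∂((lam n).withDensity fun x => ENNReal.ofReal (f n 0 x)) :=
      fun n => integral_map (hZmeas n).aemeasurable φ.continuous.aestronglyMeasurable
    simp only [h2]; exact h1
  have hclosed : ∀ F : Set ℝ, IsClosed F →
      (atTop.limsup fun n =>
        ((lam n).withDensity fun x => ENNReal.ofReal (f n 0 x)) (Z n ⁻¹' F)) ≤ N F := by
    intro F hF
    have h1 := ProbabilityMeasure.limsup_measure_closed_le_of_tendsto hν hF
    have h2 : (fun n => ((ν n : Measure ℝ) F)) = fun n =>
        ((lam n).withDensity fun x => ENNReal.ofReal (f n 0 x)) (Z n ⁻¹' F) := by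
      funext n
      exact Measure.map_apply (hZmeas n) hF.measurableSet
    rw [h2] at h1
    exact h1
  -- the per-ε bound
  have key : ∀ ε : ℝ, 0 < ε →
      ENNReal.ofReal (Real.exp (-(u ^ 2 / 2 * Γ) - 2 * ε) *
        (3 / 4 - (1 / 2 + 2 * ε / |u| * (Real.sqrt (2 * π * Γ))⁻¹ + 3 * ε))) ≤
      atTop.liminf fun n =>
        sInf {r : ℝ≥0∞ | ∃ A : Set (α n), MeasurableSet A ∧
          3 / 4 ≤ ((lam n).withDensity fun x => ENNReal.ofReal (f n 0 x)) A ∧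
          r = ((lam n).withDensity fun x => ENNReal.ofReal (f n u x)) A} := by
    intro ε hε
    set q : ℝ := 2 * ε / |u| * (Real.sqrt (2 * π * Γ))⁻¹ with hqdef
    have hqnn : 0 ≤ q := by positivity
    set d : ℝ := 1 / 2 + q + 3 * ε with hddef
    -- bounds on the Gaussian measure
    have hNF2 : N {z : ℝ | u * z ≤ -ε} ≤ 1 / 2 := by
      rcases lt_or_gt_of_ne hu with hneg | hpos'
      · refine le_trans (measure_mono ?_) (stmt18_gauss_halves hv).2
        intro z hz
        simp only [Set.mem_setOf_eq] at hz
        simp only [Set.mem_Ici]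
        nlinarith
      · refine le_trans (measure_mono ?_) (stmt18_gauss_halves hv).1
        intro z hz
        simp only [Set.mem_setOf_eq] at hz
        simp only [Set.mem_Iic]
        nlinarith
    have hNF3 : N {z : ℝ | u ^ 2 / 2 * Γ - ε ≤ u * z ∧ u * z ≤ u ^ 2 / 2 * Γ + ε}
        ≤ ENNReal.ofReal q := by
      rcases lt_or_gt_of_ne hu with hneg | hpos'
      · refine le_trans (measure_mono (?_ :
          _ ⊆ Set.Icc ((u ^ 2 / 2 * Γ + ε) / u) ((u ^ 2 / 2 * Γ - ε) / u))) ?_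
        · intro z hz
          simp only [Set.mem_setOf_eq] at hz
          constructor
          · rw [div_le_iff_of_neg hneg]; linarith [hz.2, mul_comm u z]
          · rw [le_div_iff_of_neg hneg]; linarith [hz.1, mul_comm u z]
        · refine le_trans (stmt18_gauss_Icc hv _ _) (ENNReal.ofReal_le_ofReal ?_)
          rw [hqdef, hvΓ]
          have h1 : (u ^ 2 / 2 * Γ - ε) / u - (u ^ 2 / 2 * Γ + ε) / u = 2 * ε / |u| := by
            rw [abs_of_neg hneg]
            field_simp [ne_of_lt hneg]
            ring
          rw [h1]
      · refine le_trans (measure_mono (?_ :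
          _ ⊆ Set.Icc ((u ^ 2 / 2 * Γ - ε) / u) ((u ^ 2 / 2 * Γ + ε) / u))) ?_
        · intro z hz
          simp only [Set.mem_setOf_eq] at hz
          constructor
          · rw [div_le_iff₀ hpos']; linarith [hz.1, mul_comm u z]
          · rw [le_div_iff₀ hpos']; linarith [hz.2, mul_comm u z]
        · refine le_trans (stmt18_gauss_Icc hv _ _) (ENNReal.ofReal_le_ofReal ?_)
          rw [hqdef, hvΓ]
          have h1 : (u ^ 2 / 2 * Γ + ε) / u - (u ^ 2 / 2 * Γ - ε) / u = 2 * ε / |u| := by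
            rw [abs_of_pos hpos']
            field_simp [ne_of_gt hpos']
            ring
          rw [h1]
    -- eventual bounds
    have hεE : (0 : ℝ≥0∞) < ENNReal.ofReal ε := ENNReal.ofReal_pos.mpr hε
    have E1 : ∀ᶠ n in atTop,
        ((lam n).withDensity fun x => ENNReal.ofReal (f n 0 x))
          {x | ε ≤ |Real.log (f n u x / f n 0 x) - u * Z n x + u ^ 2 / 2 * Γ|}
          < ENNReal.ofReal ε :=
      (hb ε hε).eventually_lt_const hεE
    have hF2closed : IsClosed {z : ℝ | u * z ≤ -ε} :=
      isClosed_le (continuous_const.mul continuous_id) continuous_const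
    have hF3closed : IsClosed {z : ℝ | u ^ 2 / 2 * Γ - ε ≤ u * z ∧ u * z ≤ u ^ 2 / 2 * Γ + ε} :=
      IsClosed.inter (isClosed_le continuous_const (continuous_const.mul continuous_id))
        (isClosed_le (continuous_const.mul continuous_id) continuous_const)
    have E2 : ∀ᶠ n in atTop,
        ((lam n).withDensity fun x => ENNReal.ofReal (f n 0 x))
          (Z n ⁻¹' {z : ℝ | u * z ≤ -ε}) < 1 / 2 + ENNReal.ofReal ε := by
      refine eventually_lt_of_limsup_lt ?_
      refine lt_of_le_of_lt (le_trans (hclosed _ hF2closed) hNF2) ?_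
      exact ENNReal.lt_add_right (by norm_num) (ne_of_gt hεE)
    have E3 : ∀ᶠ n in atTop,
        ((lam n).withDensity fun x => ENNReal.ofReal (f n 0 x))
          (Z n ⁻¹' {z : ℝ | u ^ 2 / 2 * Γ - ε ≤ u * z ∧ u * z ≤ u ^ 2 / 2 * Γ + ε})
          < ENNReal.ofReal q + ENNReal.ofReal ε := by
      refine eventually_lt_of_limsup_lt ?_
      refine lt_of_le_of_lt (le_trans (hclosed _ hF3closed) hNF3) ?_
      exact ENNReal.lt_add_right ENNReal.ofReal_ne_top (ne_of_gt hεE)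
    refine le_liminf_of_le (by isBoundedDefault) ?_
    filter_upwards [E1, E2, E3] with n h1 h2 h3
    refine le_sInf ?_
    rintro r ⟨A, hA, hA34, rfl⟩
    have hcore := stmt18_core (lam n) (f n 0) (f n u) (hfmeas n 0) (hfmeas n u)
      (hfnn n u) (Z n) u Γ ε hε A hA hA34
    refine le_trans ?_ hcore
    rw [ENNReal.ofReal_mul (Real.exp_pos _).le]
    gcongr
    have hsum : ((lam n).withDensity fun x => ENNReal.ofReal (f n 0 x))
          {x | ε ≤ |Real.log (f n u x / f n 0 x) - u * Z n x + u ^ 2 / 2 * Γ|}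
        + ((lam n).withDensity fun x => ENNReal.ofReal (f n 0 x))
          {x | u * Z n x ≤ -ε}
        + ((lam n).withDensity fun x => ENNReal.ofReal (f n 0 x))
          {x | u ^ 2 / 2 * Γ - ε ≤ u * Z n x ∧ u * Z n x ≤ u ^ 2 / 2 * Γ + ε}
        ≤ ENNReal.ofReal d := by
      have h2' : ((lam n).withDensity fun x => ENNReal.ofReal (f n 0 x))
          {x | u * Z n x ≤ -ε} < 1 / 2 + ENNReal.ofReal ε := h2
      have h3' : ((lam n).withDensity fun x => ENNReal.ofReal (f n 0 x))
          {x | u ^ 2 / 2 * Γ - ε ≤ u * Z n x ∧ u * Z n x ≤ u ^ 2 / 2 * Γ + ε}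
          < ENNReal.ofReal q + ENNReal.ofReal ε := h3
      calc _ ≤ ENNReal.ofReal ε + (1 / 2 + ENNReal.ofReal ε)
            + (ENNReal.ofReal q + ENNReal.ofReal ε) :=
            add_le_add (add_le_add h1.le h2'.le) h3'.le
        _ = ENNReal.ofReal d := by
            rw [show (1 / 2 : ℝ≥0∞) = ENNReal.ofReal (1 / 2) by
              rw [ENNReal.ofReal_div_of_pos (by norm_num)]; norm_num]
            rw [← ENNReal.ofReal_add (by norm_num) hε.le,
              ← ENNReal.ofReal_add hε.le (by positivity),
              ← ENNReal.ofReal_add hqnn hε.le,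
              ← ENNReal.ofReal_add (by positivity) (by positivity)]
            congr 1
            rw [hddef]
            ring
    calc ENNReal.ofReal (3 / 4 - d)
        = ENNReal.ofReal (3 / 4) - ENNReal.ofReal d := ENNReal.ofReal_sub _ (by positivity)
      _ ≤ ENNReal.ofReal (3 / 4) - _ := tsub_le_tsub_left hsum _
  -- limit as ε → 0⁺
  have hg : Tendsto (fun ε : ℝ =>
      ENNReal.ofReal (Real.exp (-(u ^ 2 / 2 * Γ) - 2 * ε) *
        (3 / 4 - (1 / 2 + 2 * ε / |u| * (Real.sqrt (2 * π * Γ))⁻¹ + 3 * ε))))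
      (nhdsWithin 0 (Set.Ioi 0))
      (𝓝 (ENNReal.ofReal (1 / 4 * Real.exp (-(u ^ 2) * Γ / 2)))) := by
    have hcont : Continuous (fun ε : ℝ =>
        Real.exp (-(u ^ 2 / 2 * Γ) - 2 * ε) *
          (3 / 4 - (1 / 2 + 2 * ε / |u| * (Real.sqrt (2 * π * Γ))⁻¹ + 3 * ε))) := by
      fun_prop
    have h0 : Real.exp (-(u ^ 2 / 2 * Γ) - 2 * 0) *
        (3 / 4 - (1 / 2 + 2 * 0 / |u| * (Real.sqrt (2 * π * Γ))⁻¹ + 3 * 0))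
        = 1 / 4 * Real.exp (-(u ^ 2) * Γ / 2) := by
      rw [show -(u ^ 2 / 2 * Γ) - 2 * (0:ℝ) = -(u ^ 2) * Γ / 2 by ring]
      norm_num
      ring
    rw [← h0]
    exact (ENNReal.continuous_ofReal.tendsto _).comp
      ((hcont.tendsto 0).mono_left (nhdsWithin_le_nhds (s := Set.Ioi 0)))
  exact le_of_tendsto hg (eventually_mem_nhdsWithin.mono fun ε hε => key ε hε)
end

section
/- Let Θ be a compact subset of ℝ, let J₀ = {1,…,N} be a finite index set, and for each n let π_{j,n} ∈ ℝ∖{0} and θ_{j,n} ∈ Θ (j ∈ J₀) be such that G_{1,n} = Σ_{j: π_{j,n}>0} π_{j,n} δ_{θ_{j,n}} and G_{2,n} = Σ_{j: π_{j,n}<0} (−π_{j,n}) δ_{θ_{j,n}} are probability measures on Θ. Suppose there are an integer S ≥ 1, scaling sequences ε_{0,n} ≡ 0 < ε_{1,n} < ⋯ < ε_{S,n} ≡ 1 with ε_{s,n} = o(ε_{s+1,n}) as n → ∞ for each 0 ≤ s < S, a function 𝔰 : J₀ × J₀ → {0,…,S} which is symmetric, vanishes on the diagonal, and satisfies the ultrametric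 inequality 𝔰(j,k) ≤ max(𝔰(j,l), 𝔰(l,k)), and a function 𝔳 from subsets of J₀ to {0,…,S}, such that |θ_{j,n} − θ_{k,n}| ≍ ε_{𝔰(j,k),n} for all j,k ∈ J₀ and |Σ_{j∈J} π_{j,n}| ≍ ε_{𝔳(J),n} for all J ⊆ J₀ (where a_n ≍ b_n means there are constants 0 < c ≤ C with c b_n ≤ a_n ≤ C b_n for all n). Let 𝒯 be the tree whose vertices are the distinct ultrametric balls B_𝔰(j,s) = {k ∈ J₀ : 𝔰(j,k) ≤ s} for j ∈ J₀ and s ∈ {0,…,S}, with root J₀; for a vertex J ≠ J₀ let p(J) denote its parent (the smallest ball in 𝒯 strictly containing J), and let 𝔰(J) = max_{j,k∈J} 𝔰(j,k). Then W(G_{1,n}, G_{2,n}) ≍ max { ε_{𝔳(J),n} · ε_{𝔰(p(J)),n} : J a vertex of 𝒯 with J ≠ J₀ }. -/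
open MeasureTheory Filter Finset
open scoped ENNReal

/-- The (L¹-)Wasserstein distance `W(G₁,G₂) = ∫ |G₁((−∞,t]) − G₂((−∞,t])| dt`. -/
noncomputable def wass (G₁ G₂ : Measure ℝ) : ℝ :=
  ∫ t, |(G₁ (Set.Iic t)).toReal - (G₂ (Set.Iic t)).toReal|

/-- The closed ultrametric ball `B_𝔰(j,t) = {k : 𝔰(j,k) ≤ t}`. -/
def umBall {N : ℕ} (s : Fin N → Fin N → ℕ) (j : Fin N) (t : ℕ) : Finset (Fin N) :=
  Finset.univ.filter fun k => s j k ≤ t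

/-- The vertices of the coarse-graining tree `𝒯`: the distinct ultrametric balls. -/
def treeVerts {N : ℕ} (s : Fin N → Fin N → ℕ) (S : ℕ) : Set (Finset (Fin N)) :=
  {J | ∃ j t, t ≤ S ∧ J = umBall s j t}

/-- `K` is the parent of `J` in the tree: the smallest vertex strictly containing `J`. -/
def IsParent {N : ℕ} (s : Fin N → Fin N → ℕ) (S : ℕ) (K J : Finset (Fin N)) : Prop :=
  K ∈ treeVerts s S ∧ J ⊂ K ∧ ∀ H ∈ treeVerts s S, J ⊂ H → K ⊆ H

/-- The `𝔰`-diameter `𝔰(K) = max_{j,k ∈ K} 𝔰(j,k)` of a vertex. -/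
def sDiam {N : ℕ} (s : Fin N → Fin N → ℕ) (K : Finset (Fin N)) : ℕ :=
  K.sup fun j => K.sup fun k => s j k

namespace Stmt19

variable {N : ℕ} {s : Fin N → Fin N → ℕ}

lemma mem_umBall {j k : Fin N} {t : ℕ} : k ∈ umBall s j t ↔ s j k ≤ t := by
  simp [umBall]

lemma self_mem_umBall (hdiag : ∀ j, s j j = 0) (j : Fin N) (t : ℕ) : j ∈ umBall s j t := by
  simp [mem_umBall, hdiag]

lemma umBall_eq_of_mem (hsymm : ∀ j k, s j k = s k j)
    (hultra : ∀ j k l, s j k ≤ max (s j l) (s l k))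
    {j k : Fin N} {t : ℕ} (h : s j k ≤ t) : umBall s j t = umBall s k t := by
  ext l
  simp only [mem_umBall]
  constructor
  · intro hl
    exact le_trans (hultra k l j) (max_le (hsymm j k ▸ h) hl)
  · intro hl
    exact le_trans (hultra j l k) (max_le h (hsymm k l ▸ hl))

lemma s_le_sDiam {J : Finset (Fin N)} {j k : Fin N} (hj : j ∈ J) (hk : k ∈ J) :
    s j k ≤ sDiam s J :=
  le_trans (Finset.le_sup hk) (Finset.le_sup (f := fun j => J.sup fun k => s j k) hj)

lemma sDiam_le {J : Finset (Fin N)} {m : ℕ} (h : ∀ j ∈ J, ∀ k ∈ J, s j k ≤ m) :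
    sDiam s J ≤ m :=
  Finset.sup_le fun j hj => Finset.sup_le fun k hk => h j hj k hk

lemma sDiam_mono {J K : Finset (Fin N)} (h : J ⊆ K) : sDiam s J ≤ sDiam s K :=
  sDiam_le fun j hj k hk => s_le_sDiam (h hj) (h hk)

lemma sDiam_umBall_le (hsymm : ∀ j k, s j k = s k j)
    (hultra : ∀ j k l, s j k ≤ max (s j l) (s l k)) (j : Fin N) (t : ℕ) :
    sDiam s (umBall s j t) ≤ t := by
  refine sDiam_le fun a ha b hb => ?_
  rw [mem_umBall] at ha hb
  exact le_trans (hultra a b j) (max_le (by rw [hsymm]; exact ha) hb)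

lemma subset_umBall_sDiam {J : Finset (Fin N)} {j : Fin N} (hj : j ∈ J) :
    J ⊆ umBall s j (sDiam s J) := fun k hk => mem_umBall.2 (s_le_sDiam hj hk)

/-- A vertex containing `j` is the ball around `j` of radius its diameter. -/
lemma vertex_eq_ball_sDiam (hsymm : ∀ j k, s j k = s k j)
    (hultra : ∀ j k l, s j k ≤ max (s j l) (s l k))
    {J : Finset (Fin N)} {j₀ : Fin N} {t : ℕ} (hJ : J = umBall s j₀ t)
    {j : Fin N} (hj : j ∈ J) : J = umBall s j (sDiam s J) := by
  have h1 : J = umBall s j t := by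
    rw [hJ]; exact umBall_eq_of_mem hsymm hultra (mem_umBall.1 (hJ ▸ hj))
  refine le_antisymm (subset_umBall_sDiam hj) ?_
  intro k hk
  rw [h1]
  rw [mem_umBall] at hk ⊢
  exact le_trans hk (by rw [h1]; exact sDiam_umBall_le hsymm hultra j t)


lemma vertex_mem_self (hdiag : ∀ j, s j j = 0) {S : ℕ} {J : Finset (Fin N)}
    (hJ : J ∈ treeVerts s S) : ∃ j₀, j₀ ∈ J := by
  obtain ⟨j₀, t₀, _, rfl⟩ := hJ
  exact ⟨j₀, self_mem_umBall hdiag j₀ t₀⟩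

lemma sDiam_le_S {S : ℕ} (hsle : ∀ j k, s j k ≤ S) (J : Finset (Fin N)) : sDiam s J ≤ S :=
  sDiam_le fun j _ k _ => hsle j k

/-- separation: if `K` is the parent of `J`, points of `J` and points outside `J`
are at `s`-distance at least `sDiam K`. -/
lemma parent_sep (hsymm : ∀ j k, s j k = s k j)
    (hultra : ∀ j k l, s j k ≤ max (s j l) (s l k))
    {S : ℕ} (hsle : ∀ j k, s j k ≤ S)
    {J K : Finset (Fin N)} (hJv : J ∈ treeVerts s S) (hP : IsParent s S K J)
    {j k : Fin N} (hj : j ∈ J) (hk : k ∉ J) : sDiam s K ≤ s j k := by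
  obtain ⟨hKv, hJK, hmin⟩ := hP
  obtain ⟨j₀, t₀, ht₀, hJeq⟩ := hJv
  have hHv : umBall s j (max (s j k) (sDiam s J)) ∈ treeVerts s S :=
    ⟨j, _, max_le (hsle j k) (le_trans (sDiam_le fun a _ b _ => hsle a b) le_rfl), rfl⟩
  have hJH : J ⊆ umBall s j (max (s j k) (sDiam s J)) := fun l hl =>
    mem_umBall.2 (le_trans (s_le_sDiam hj hl) (le_max_right _ _))
  have hkH : k ∈ umBall s j (max (s j k) (sDiam s J)) := mem_umBall.2 (le_max_left _ _)
  have hJH' : J ⊂ umBall s j (max (s j k) (sDiam s J)) :=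
    (Finset.ssubset_iff_of_subset hJH).2 ⟨k, hkH, hk⟩
  have hKH : K ⊆ umBall s j (max (s j k) (sDiam s J)) := hmin _ hHv hJH'
  have h1 : sDiam s K ≤ max (s j k) (sDiam s J) :=
    le_trans (sDiam_mono hKH) (sDiam_umBall_le hsymm hultra _ _)
  -- now show sDiam J < sDiam K
  have hJ' : J = umBall s j (sDiam s J) := vertex_eq_ball_sDiam hsymm hultra hJeq hj
  obtain ⟨j₁, t₁, _, hKeq⟩ := hKv
  have hK' : K = umBall s j (sDiam s K) := vertex_eq_ball_sDiam hsymm hultra hKeq (hJK.subset hj)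
  have hlt : sDiam s J < sDiam s K := by
    rcases lt_or_eq_of_le (sDiam_mono hJK.subset) with h | h
    · exact h
    · exact absurd (hJ'.trans (h ▸ hK'.symm)) hJK.ne
  omega

lemma parent_sDiam_pos (hsymm : ∀ j k, s j k = s k j)
    (hultra : ∀ j k l, s j k ≤ max (s j l) (s l k)) (hdiag : ∀ j, s j j = 0)
    {S : ℕ} (hsle : ∀ j k, s j k ≤ S)
    {J K : Finset (Fin N)} (hJv : J ∈ treeVerts s S) (hP : IsParent s S K J) :
    1 ≤ sDiam s K := by
  obtain ⟨j₀, hj₀⟩ := vertex_mem_self hdiag hJv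
  obtain ⟨k, hkK, hkJ⟩ := Finset.exists_of_ssubset hP.2.1
  have hkd : s j₀ k ≤ sDiam s K := s_le_sDiam (hP.2.1.subset hj₀) hkK
  by_contra h
  push_neg at h
  obtain ⟨j₁, t₁, _, hJeq⟩ := hJv
  have : k ∈ J := by
    rw [vertex_eq_ball_sDiam hsymm hultra hJeq hj₀]
    exact mem_umBall.2 (by omega)
  exact hkJ this

/-- The representative (minimum element) of the ball `B(j,t)`. -/
noncomputable def rep (s : Fin N → Fin N → ℕ) (j : Fin N) (t : ℕ) : Fin N :=
  if h : (umBall s j t).Nonempty then (umBall s j t).min' h else j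

lemma rep_mem (hdiag : ∀ j, s j j = 0) (j : Fin N) (t : ℕ) : rep s j t ∈ umBall s j t := by
  rw [rep, dif_pos ⟨j, self_mem_umBall hdiag j t⟩]
  exact Finset.min'_mem _ _

lemma rep_eq_of_ball_eq (hdiag : ∀ j, s j j = 0) {j k : Fin N} {t t' : ℕ}
    (h : umBall s j t = umBall s k t') : rep s j t = rep s k t' := by
  have hne : (umBall s j t).Nonempty := ⟨j, self_mem_umBall hdiag j t⟩
  rw [rep, rep, dif_pos hne, dif_pos (h ▸ hne)]
  congr 1

lemma rep_eq_of_le (hsymm : ∀ j k, s j k = s k j)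
    (hultra : ∀ j k l, s j k ≤ max (s j l) (s l k)) (hdiag : ∀ j, s j j = 0)
    {j k : Fin N} {t : ℕ} (h : s j k ≤ t) : rep s j t = rep s k t :=
  rep_eq_of_ball_eq hdiag (umBall_eq_of_mem hsymm hultra h)

lemma s_rep_le (hsymm : ∀ j k, s j k = s k j) (hdiag : ∀ j, s j j = 0)
    (j : Fin N) (t : ℕ) : s j (rep s j t) ≤ t :=
  mem_umBall.1 (rep_mem hdiag j t)

lemma rep_idem (hsymm : ∀ j k, s j k = s k j)
    (hultra : ∀ j k l, s j k ≤ max (s j l) (s l k)) (hdiag : ∀ j, s j j = 0)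
    (j : Fin N) (t : ℕ) : rep s (rep s j t) t = rep s j t :=
  (rep_eq_of_le hsymm hultra hdiag (s_rep_le hsymm hdiag j t)).symm

lemma rep_succ (hsymm : ∀ j k, s j k = s k j)
    (hultra : ∀ j k l, s j k ≤ max (s j l) (s l k)) (hdiag : ∀ j, s j j = 0)
    (j : Fin N) (u : ℕ) : rep s (rep s j u) (u + 1) = rep s j (u + 1) :=
  (rep_eq_of_le hsymm hultra hdiag (le_trans (s_rep_le hsymm hdiag j u) (Nat.le_succ u))).symm

lemma umBall_top {S : ℕ} (hsle : ∀ j k, s j k ≤ S) (j : Fin N) : umBall s j S = univ := by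
  ext k; simp [mem_umBall, hsle]

lemma rep_top (hdiag : ∀ j, s j j = 0) {S : ℕ} (hsle : ∀ j k, s j k ≤ S) (j k : Fin N) :
    rep s j S = rep s k S :=
  rep_eq_of_ball_eq hdiag ((umBall_top hsle j).trans (umBall_top hsle k).symm)

section eps
variable {eps : ℕ → ℕ → ℝ} {S : ℕ}

lemma eps_mono (hmono : ∀ n, ∀ t < S, eps t n < eps (t + 1) n)
    (n : ℕ) {a b : ℕ} (hab : a ≤ b) (hb : b ≤ S) : eps a n ≤ eps b n := by
  induction hab with
  | refl => exact le_rfl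
  | @step b' h ih =>
      exact le_trans (ih (by omega)) (le_of_lt (hmono n b' (by omega)))

lemma eps_nonneg (heps0 : ∀ n, eps 0 n = 0) (hmono : ∀ n, ∀ t < S, eps t n < eps (t + 1) n)
    (n : ℕ) {t : ℕ} (ht : t ≤ S) : 0 ≤ eps t n := by
  rw [← heps0 n]
  exact eps_mono hmono n (Nat.zero_le t) ht

lemma eps_pos (heps0 : ∀ n, eps 0 n = 0) (hmono : ∀ n, ∀ t < S, eps t n < eps (t + 1) n)
    (n : ℕ) {t : ℕ} (ht1 : 1 ≤ t) (ht : t ≤ S) : 0 < eps t n := by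
  have h1 : eps 0 n < eps 1 n := hmono n 0 (by omega)
  rw [heps0 n] at h1
  exact lt_of_lt_of_le h1 (eps_mono hmono n ht1 ht)

end eps


/-! ### Step functions -/

noncomputable def stepf (a : ℝ) : ℝ → ℝ := fun t => if a ≤ t then 1 else 0

lemma stepf_monotone (a : ℝ) : Monotone (stepf a) := by
  intro x y hxy
  by_cases h1 : a ≤ x
  · simp [stepf, h1, le_trans h1 hxy]
  · by_cases h2 : a ≤ y <;> simp [stepf, h1, h2]

lemma intervalIntegrable_stepf (a x y : ℝ) : IntervalIntegrable (stepf a) volume x y :=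
  (stepf_monotone a).intervalIntegrable

lemma stepf_sub_eq (a b t : ℝ) :
    stepf a t - stepf b t
      = (Set.Ico a b).indicator (fun _ => (1:ℝ)) t - (Set.Ico b a).indicator (fun _ => (1:ℝ)) t := by
  have hico : ∀ x y : ℝ, (Set.Ico x y).indicator (fun _ => (1:ℝ)) t
      = if x ≤ t ∧ t < y then 1 else 0 := by
    intro x y; simp [Set.indicator_apply, Set.mem_Ico]
  rw [hico, hico]
  unfold stepf
  by_cases h1 : a ≤ t <;> by_cases h2 : b ≤ t
  · rw [if_pos h1, if_pos h2, if_neg (fun h => absurd h2 (not_le.2 h.2)),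
      if_neg (fun h => absurd h1 (not_le.2 h.2))]
    ring
  · rw [if_pos h1, if_neg h2, if_pos ⟨h1, not_le.1 h2⟩, if_neg (fun h => h2 h.1)]
  · rw [if_neg h1, if_pos h2, if_neg (fun h => h1 h.1), if_pos ⟨h2, not_le.1 h1⟩]
  · rw [if_neg h1, if_neg h2, if_neg (fun h => h1 h.1), if_neg (fun h => h2 h.1)]

lemma integrable_indicator_Ico (a b : ℝ) :
    Integrable ((Set.Ico a b).indicator (fun _ => (1:ℝ))) := by
  rw [integrable_indicator_iff measurableSet_Ico]
  exact integrableOn_const (by rw [Real.volume_Ico]; exact ENNReal.ofReal_ne_top)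

lemma integrable_stepf_sub (a b : ℝ) : Integrable (fun t => stepf a t - stepf b t) := by
  have : (fun t => stepf a t - stepf b t)
      = fun t => (Set.Ico a b).indicator (fun _ => (1:ℝ)) t - (Set.Ico b a).indicator (fun _ => (1:ℝ)) t :=
    funext fun t => stepf_sub_eq a b t
  rw [this]
  exact (integrable_indicator_Ico a b).sub (integrable_indicator_Ico b a)

lemma abs_stepf_sub_eq (a b t : ℝ) :
    |stepf a t - stepf b t| = (Set.Ico (min a b) (max a b)).indicator (fun _ => (1:ℝ)) t := by
  simp only [Set.indicator_apply, Set.mem_Ico, min_le_iff, lt_max_iff]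
  unfold stepf
  by_cases h1 : a ≤ t <;> by_cases h2 : b ≤ t
  · rw [if_pos h1, if_pos h2, if_neg (fun h => h.2.elim (not_lt.2 h1) (not_lt.2 h2))]
    norm_num
  · rw [if_pos h1, if_neg h2, if_pos ⟨Or.inl h1, Or.inr (not_le.1 h2)⟩]
    norm_num
  · rw [if_neg h1, if_pos h2, if_pos ⟨Or.inr h2, Or.inl (not_le.1 h1)⟩]
    norm_num
  · rw [if_neg h1, if_neg h2, if_neg (fun h => h.1.elim h1 h2)]
    norm_num

lemma integral_abs_stepf_sub (a b : ℝ) : ∫ t, |stepf a t - stepf b t| ≤ |a - b| := by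
  have h : (fun t => |stepf a t - stepf b t|)
      = ((Set.Ico (min a b) (max a b)).indicator (fun _ => (1:ℝ))) :=
    funext fun t => abs_stepf_sub_eq a b t
  rw [h]
  rw [MeasureTheory.integral_indicator_const (1:ℝ) measurableSet_Ico]
  rw [measureReal_def, Real.volume_Ico]
  rw [smul_eq_mul, mul_one]
  rw [ENNReal.toReal_ofReal (by simp [min_le_max])]
  rw [max_sub_min_eq_abs]
  exact (abs_sub_comm b a).le

/-! ### The telescoping identity over the tree -/

lemma telescope (hN : 0 < N) (hsymm : ∀ j k, s j k = s k j)
    (hultra : ∀ j k l, s j k ≤ max (s j l) (s l k)) (hdiag : ∀ j, s j j = 0)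
    {S : ℕ} (hsle : ∀ j k, s j k ≤ S) (π' θ' : Fin N → ℝ)
    (hsum : ∑ j, π' j = 0) (hθ0 : ∀ j k, s j k = 0 → θ' j = θ' k) (g : ℝ → ℝ) :
    ∑ j, π' j * g (θ' j) =
      ∑ u ∈ Finset.range S, ∑ j ∈ univ.filter (fun j => rep s j u = j),
        (∑ k ∈ umBall s j u, π' k) * (g (θ' j) - g (θ' (rep s j (u+1)))) := by
  have key : ∀ (u : ℕ) (φ : Fin N → ℝ),
      ∑ j ∈ univ.filter (fun j => rep s j u = j), (∑ k ∈ umBall s j u, π' k) * φ j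
        = ∑ k, π' k * φ (rep s k u) := by
    intro u φ
    have hmaps : ∀ k : Fin N, k ∈ univ → rep s k u ∈ univ.filter (fun j => rep s j u = j) := by
      intro k _
      exact Finset.mem_filter.2 ⟨Finset.mem_univ _, rep_idem hsymm hultra hdiag k u⟩
    rw [← Finset.sum_fiberwise_of_maps_to hmaps (fun k => π' k * φ (rep s k u))]
    refine Finset.sum_congr rfl fun j hj => ?_
    have hjj : rep s j u = j := (Finset.mem_filter.1 hj).2
    have hfib : univ.filter (fun k => rep s k u = j) = umBall s j u := by
      ext k
      simp only [Finset.mem_filter, Finset.mem_univ, true_and, mem_umBall]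
      constructor
      · intro hk
        have := rep_mem hdiag k u
        rw [hk] at this
        exact hsymm k j ▸ mem_umBall.1 this
      · intro hk
        rw [← hjj]
        exact rep_eq_of_le hsymm hultra hdiag (hsymm j k ▸ hk)
    rw [hfib, Finset.sum_mul]
    refine Finset.sum_congr rfl fun k hk => ?_
    have hrk : rep s k u = j := by
      rw [← hjj]
      exact rep_eq_of_le hsymm hultra hdiag (hsymm j k ▸ mem_umBall.1 hk)
    rw [hrk]
  have step2 : ∀ u ∈ Finset.range S,
      ∑ j ∈ univ.filter (fun j => rep s j u = j),
        (∑ k ∈ umBall s j u, π' k) * (g (θ' j) - g (θ' (rep s j (u+1))))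
      = ∑ k, π' k * (g (θ' (rep s k u)) - g (θ' (rep s k (u+1)))) := by
    intro u _
    rw [key u (fun j => g (θ' j) - g (θ' (rep s j (u+1))))]
    refine Finset.sum_congr rfl fun k _ => ?_
    rw [rep_succ hsymm hultra hdiag k u]
  rw [Finset.sum_congr rfl step2, Finset.sum_comm]
  have step3 : ∀ k : Fin N,
      ∑ u ∈ Finset.range S, π' k * (g (θ' (rep s k u)) - g (θ' (rep s k (u+1))))
      = π' k * (g (θ' (rep s k 0)) - g (θ' (rep s k S))) := by
    intro k
    rw [← Finset.mul_sum]
    congr 1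
    exact Finset.sum_range_sub' (fun u => g (θ' (rep s k u))) S
  rw [Finset.sum_congr rfl (fun k _ => step3 k)]
  symm
  have h0 : ∀ k : Fin N, θ' (rep s k 0) = θ' k := by
    intro k
    refine (hθ0 k (rep s k 0) ?_).symm
    exact Nat.le_zero.1 (s_rep_le hsymm hdiag k 0)
  obtain ⟨j₀⟩ : Nonempty (Fin N) := ⟨⟨0, hN⟩⟩
  have hS : ∀ k : Fin N, rep s k S = rep s j₀ S := fun k => rep_top hdiag hsle k j₀
  calc ∑ k, π' k * (g (θ' (rep s k 0)) - g (θ' (rep s k S)))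
      = ∑ k, (π' k * g (θ' k) - π' k * g (θ' (rep s j₀ S))) := by
        refine Finset.sum_congr rfl fun k _ => ?_
        rw [h0 k, hS k, mul_sub]
    _ = ∑ k, π' k * g (θ' k) - (∑ k, π' k) * g (θ' (rep s j₀ S)) := by
        rw [Finset.sum_sub_distrib, Finset.sum_mul]
    _ = ∑ k, π' k * g (θ' k) := by rw [hsum]; ring


/-! ### CDF of a finite positive combination of Dirac masses -/

lemma cdf_part (A : Finset (Fin N)) (ρ θ' : Fin N → ℝ) (hρ : ∀ j ∈ A, 0 ≤ ρ j) (t : ℝ) :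
    ((∑ j ∈ A, ENNReal.ofReal (ρ j) • Measure.dirac (θ' j)) (Set.Iic t)).toReal
      = ∑ j ∈ A, ρ j * stepf (θ' j) t := by
  rw [Measure.finset_sum_apply]
  rw [ENNReal.toReal_sum]
  · refine Finset.sum_congr rfl fun j hj => ?_
    rw [Measure.smul_apply, Measure.dirac_apply' _ measurableSet_Iic, smul_eq_mul,
      ENNReal.toReal_mul, ENNReal.toReal_ofReal (hρ j hj)]
    congr 1
    by_cases h : θ' j ≤ t
    · simp [Set.indicator_apply, Set.mem_Iic, h, stepf]
    · simp [Set.indicator_apply, Set.mem_Iic, h, stepf]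
  · intro j hj
    rw [Measure.smul_apply, Measure.dirac_apply' _ measurableSet_Iic, smul_eq_mul]
    refine ENNReal.mul_ne_top ENNReal.ofReal_ne_top ?_
    by_cases h : θ' j ≤ t
    · simp [Set.indicator_apply, Set.mem_Iic, h]
    · simp [Set.indicator_apply, Set.mem_Iic, h]

lemma cdf_eq (π' θ' : Fin N → ℝ) (hπ' : ∀ j, π' j ≠ 0) (t : ℝ) :
    ((∑ j ∈ univ.filter (fun j => 0 < π' j), ENNReal.ofReal (π' j) • Measure.dirac (θ' j))
        (Set.Iic t)).toReal
      - ((∑ j ∈ univ.filter (fun j => π' j < 0), ENNReal.ofReal (-(π' j)) • Measure.dirac (θ' j))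
        (Set.Iic t)).toReal
      = ∑ j, π' j * stepf (θ' j) t := by
  rw [cdf_part _ _ θ' (fun j hj => le_of_lt (Finset.mem_filter.1 hj).2) t,
    cdf_part _ _ θ' (fun j hj => by
      have := (Finset.mem_filter.1 hj).2; linarith) t]
  have hsplit := Finset.sum_filter_add_sum_filter_not Finset.univ (fun j => 0 < π' j)
    (fun j => π' j * stepf (θ' j) t)
  have hneg : univ.filter (fun j => ¬ 0 < π' j) = univ.filter (fun j => π' j < 0) := by
    refine Finset.filter_congr fun j _ => ?_
    constructor
    · intro h; exact lt_of_le_of_ne (not_lt.1 h) (hπ' j)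
    · intro h; exact not_lt.2 (le_of_lt h)
  rw [hneg] at hsplit
  rw [← hsplit]
  have : ∑ j ∈ univ.filter (fun j => π' j < 0), -(π' j) * stepf (θ' j) t
      = - ∑ j ∈ univ.filter (fun j => π' j < 0), π' j * stepf (θ' j) t := by
    rw [← Finset.sum_neg_distrib]
    exact Finset.sum_congr rfl fun j _ => by ring
  rw [this]
  ring

/-- total mass zero -/
lemma total_mass_zero (π' : Fin N → ℝ) (hπ' : ∀ j, π' j ≠ 0)
    (h1 : ∑ j ∈ univ.filter (fun j => 0 < π' j), π' j = 1)
    (h2 : ∑ j ∈ univ.filter (fun j => π' j < 0), -(π' j) = 1) :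
    ∑ j, π' j = 0 := by
  have hsplit := Finset.sum_filter_add_sum_filter_not Finset.univ (fun j => 0 < π' j)
    (fun j => π' j)
  have hneg : univ.filter (fun j => ¬ 0 < π' j) = univ.filter (fun j => π' j < 0) := by
    refine Finset.filter_congr fun j _ => ?_
    constructor
    · intro h; exact lt_of_le_of_ne (not_lt.1 h) (hπ' j)
    · intro h; exact not_lt.2 (le_of_lt h)
  rw [hneg] at hsplit
  have h2' : ∑ j ∈ univ.filter (fun j => π' j < 0), π' j = -1 := by
    have : ∑ j ∈ univ.filter (fun j => π' j < 0), -(π' j)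
        = - ∑ j ∈ univ.filter (fun j => π' j < 0), π' j := by
      rw [← Finset.sum_neg_distrib]
    rw [this] at h2
    linarith
  rw [← hsplit, h1, h2']
  ring


/-! ### Integrability and the upper estimate for `∫ |F|` -/

lemma F_integrable (hN : 0 < N) (hsymm : ∀ j k, s j k = s k j)
    (hultra : ∀ j k l, s j k ≤ max (s j l) (s l k)) (hdiag : ∀ j, s j j = 0)
    {S : ℕ} (hsle : ∀ j k, s j k ≤ S) (π' θ' : Fin N → ℝ)
    (hsum : ∑ j, π' j = 0) (hθ0 : ∀ j k, s j k = 0 → θ' j = θ' k) :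
    Integrable (fun t => ∑ j, π' j * stepf (θ' j) t) := by
  have hFeq : (fun t => ∑ j, π' j * stepf (θ' j) t)
      = fun t => ∑ u ∈ Finset.range S, ∑ j ∈ univ.filter (fun j => rep s j u = j),
          (∑ k ∈ umBall s j u, π' k) * (stepf (θ' j) t - stepf (θ' (rep s j (u+1))) t) :=
    funext fun t => telescope hN hsymm hultra hdiag hsle π' θ' hsum hθ0 (fun x => stepf x t)
  rw [hFeq]
  refine integrable_finset_sum _ fun u _ => integrable_finset_sum _ fun j _ => ?_
  exact (integrable_stepf_sub (θ' j) (θ' (rep s j (u+1)))).const_mul _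

lemma F_upper (hN : 0 < N) (hsymm : ∀ j k, s j k = s k j)
    (hultra : ∀ j k l, s j k ≤ max (s j l) (s l k)) (hdiag : ∀ j, s j j = 0)
    {S : ℕ} (hsle : ∀ j k, s j k ≤ S) (π' θ' : Fin N → ℝ)
    (hsum : ∑ j, π' j = 0) (hθ0 : ∀ j k, s j k = 0 → θ' j = θ' k) :
    ∫ t, |∑ j, π' j * stepf (θ' j) t|
      ≤ ∑ u ∈ Finset.range S, ∑ j ∈ univ.filter (fun j => rep s j u = j),
          |∑ k ∈ umBall s j u, π' k| * |θ' j - θ' (rep s j (u+1))| := by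
  have hFeq : (fun t => ∑ j, π' j * stepf (θ' j) t)
      = fun t => ∑ u ∈ Finset.range S, ∑ j ∈ univ.filter (fun j => rep s j u = j),
          (∑ k ∈ umBall s j u, π' k) * (stepf (θ' j) t - stepf (θ' (rep s j (u+1))) t) :=
    funext fun t => telescope hN hsymm hultra hdiag hsle π' θ' hsum hθ0 (fun x => stepf x t)
  calc ∫ t, |∑ j, π' j * stepf (θ' j) t|
      ≤ ∫ t, ∑ u ∈ Finset.range S, ∑ j ∈ univ.filter (fun j => rep s j u = j),
          |∑ k ∈ umBall s j u, π' k| * |stepf (θ' j) t - stepf (θ' (rep s j (u+1))) t| := by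
        refine integral_mono ((F_integrable hN hsymm hultra hdiag hsle π' θ' hsum hθ0).abs) ?_ ?_
        · refine integrable_finset_sum _ fun u _ => integrable_finset_sum _ fun j _ => ?_
          exact ((integrable_stepf_sub (θ' j) (θ' (rep s j (u+1)))).abs).const_mul _
        · intro t
          have h1 : |∑ j, π' j * stepf (θ' j) t|
              = |∑ u ∈ Finset.range S, ∑ j ∈ univ.filter (fun j => rep s j u = j),
                  (∑ k ∈ umBall s j u, π' k) * (stepf (θ' j) t - stepf (θ' (rep s j (u+1))) t)| := by
            rw [congrFun hFeq t]
          simp only []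
          rw [h1]
          refine le_trans (Finset.abs_sum_le_sum_abs _ _) (Finset.sum_le_sum fun u _ => ?_)
          refine le_trans (Finset.abs_sum_le_sum_abs _ _) (Finset.sum_le_sum fun j _ => ?_)
          rw [abs_mul]
    _ = ∑ u ∈ Finset.range S, ∑ j ∈ univ.filter (fun j => rep s j u = j),
          |∑ k ∈ umBall s j u, π' k| * ∫ t, |stepf (θ' j) t - stepf (θ' (rep s j (u+1))) t| := by
        rw [integral_finset_sum _ fun u _ => integrable_finset_sum _ fun j _ =>
          ((integrable_stepf_sub (θ' j) (θ' (rep s j (u+1)))).abs).const_mul _]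
        refine Finset.sum_congr rfl fun u _ => ?_
        rw [integral_finset_sum _ fun j _ =>
          ((integrable_stepf_sub (θ' j) (θ' (rep s j (u+1)))).abs).const_mul _]
        refine Finset.sum_congr rfl fun j _ => ?_
        exact integral_const_mul _ _
    _ ≤ _ := by
        refine Finset.sum_le_sum fun u _ => Finset.sum_le_sum fun j _ => ?_
        exact mul_le_mul_of_nonneg_left (integral_abs_stepf_sub _ _) (abs_nonneg _)


/-! ### Lower estimate machinery -/

lemma indT_eq (T : Finset (Fin N)) (b : Fin N → ℝ) (u : ℝ) :
    (∏ i ∈ T, (if b i ≤ u then (1:ℝ) else 0)) = if (∀ i ∈ T, b i ≤ u) then 1 else 0 := by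
  by_cases hall : ∀ i ∈ T, b i ≤ u
  · rw [if_pos hall]
    rw [Finset.prod_congr rfl (fun i hi => if_pos (hall i hi))]
    exact Finset.prod_const_one
  · rw [if_neg hall]
    push_neg at hall
    obtain ⟨i₀, hi₀, hgt⟩ := hall
    exact Finset.prod_eq_zero hi₀ (if_neg (not_le.2 hgt))

lemma prod_neg_ind (T : Finset (Fin N)) (b : Fin N → ℝ) (u : ℝ) :
    (∏ i ∈ T, (-(if b i ≤ u then (1:ℝ) else 0)))
      = (-1) ^ T.card * ∏ i ∈ T, (if b i ≤ u then (1:ℝ) else 0) := by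
  rw [← Finset.prod_const (-1 : ℝ), ← Finset.prod_mul_distrib]
  exact Finset.prod_congr rfl fun i _ => by ring

lemma bounds_iff {T : Finset (Fin N)} (hT : T.Nonempty) (θ' : Fin N → ℝ) (x u : ℝ) :
    (∀ i ∈ T, |x - θ' i| ≤ u)
      ↔ (T.sup' hT θ' - u ≤ x ∧ x ≤ T.inf' hT θ' + u) := by
  constructor
  · intro hall
    constructor
    · rw [sub_le_iff_le_add]
      exact Finset.sup'_le hT θ' fun i hi => by
        have := abs_le.1 (hall i hi); linarith [this.1]
    · rw [← sub_le_iff_le_add]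
      exact Finset.le_inf' hT θ' fun i hi => by
        have := abs_le.1 (hall i hi); linarith [this.2]
  · rintro ⟨h1, h2⟩ i hi
    rw [abs_le]
    constructor
    · have := Finset.le_sup' θ' hi; linarith
    · have := Finset.inf'_le θ' hi; linarith

/-- Pointwise: `|term_T u| ≤ |F (m_T + u)| + |F⁻ (M_T − u)|`. -/
lemma term_pointwise (π' θ' : Fin N → ℝ) {T : Finset (Fin N)} (hT : T.Nonempty) (u : ℝ) :
    |∑ j', π' j' * (if (∀ i ∈ T, |θ' j' - θ' i| ≤ u) then (1:ℝ) else 0)|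
      ≤ |∑ j', π' j' * stepf (θ' j') (T.inf' hT θ' + u)|
        + |∑ j', π' j' * (if θ' j' < T.sup' hT θ' - u then (1:ℝ) else 0)| := by
  set M := T.sup' hT θ' with hM
  set m := T.inf' hT θ' with hm
  by_cases hcase : M - u ≤ m + u
  · have hterm : ∀ j' : Fin N,
        (if (∀ i ∈ T, |θ' j' - θ' i| ≤ u) then (1:ℝ) else 0)
          = stepf (θ' j') (m + u) - (if θ' j' < M - u then (1:ℝ) else 0) := by
      intro j'
      rw [if_congr (bounds_iff hT θ' (θ' j') u) rfl rfl]
      unfold stepf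
      by_cases h1 : θ' j' ≤ m + u
      · by_cases h2 : θ' j' < M - u
        · rw [if_neg (fun h => absurd h.1 (not_le.2 h2)), if_pos h1, if_pos h2]; ring
        · rw [if_pos ⟨not_lt.1 h2, h1⟩, if_pos h1, if_neg h2]; ring
      · rw [if_neg (fun h => h1 h.2), if_neg h1,
          if_neg (fun h2 => h1 (le_trans (le_of_lt h2) (by linarith)))]
        ring
    calc |∑ j', π' j' * (if (∀ i ∈ T, |θ' j' - θ' i| ≤ u) then (1:ℝ) else 0)|
        = |∑ j', π' j' * stepf (θ' j') (m + u)
            - ∑ j', π' j' * (if θ' j' < M - u then (1:ℝ) else 0)| := by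
          rw [← Finset.sum_sub_distrib]
          congr 1
          exact Finset.sum_congr rfl fun j' _ => by rw [hterm j']; ring
      _ ≤ _ := abs_sub _ _
  · have hterm : ∀ j' : Fin N,
        (if (∀ i ∈ T, |θ' j' - θ' i| ≤ u) then (1:ℝ) else 0) = 0 := by
      intro j'
      rw [if_congr (bounds_iff hT θ' (θ' j') u) rfl rfl]
      exact if_neg (fun h => hcase (le_trans h.1 h.2))
    rw [Finset.sum_congr rfl (fun j' _ => by rw [hterm j', mul_zero])]
    rw [Finset.sum_const_zero, abs_zero]
    positivity


lemma intervalIntegrable_finsum {f : Fin N → ℝ → ℝ} {x y : ℝ}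
    (h : ∀ j, IntervalIntegrable (f j) volume x y) :
    IntervalIntegrable (fun u => ∑ j, f j u) volume x y := by
  have h1 := IntervalIntegrable.sum (μ := volume) (a := x) (b := y) Finset.univ
    (f := f) (fun j _ => h j)
  have heq : (∑ j, f j) = fun u => ∑ j, f j u := by
    funext u; simp
  rwa [heq] at h1

lemma intervalIntegrable_term (π' θ' : Fin N → ℝ) (T : Finset (Fin N)) (x y : ℝ) :
    IntervalIntegrable
      (fun u => ∑ j', π' j' * (if (∀ i ∈ T, |θ' j' - θ' i| ≤ u) then (1:ℝ) else 0))
      volume x y := by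
  have hrw : (fun u => ∑ j', π' j' * (if (∀ i ∈ T, |θ' j' - θ' i| ≤ u) then (1:ℝ) else 0))
      = fun u => ∑ j', π' j' * ∏ i ∈ T, stepf (|θ' j' - θ' i|) u := by
    funext u
    refine Finset.sum_congr rfl fun j' _ => ?_
    unfold stepf
    rw [indT_eq T (fun i => |θ' j' - θ' i|) u]
  rw [hrw]
  refine intervalIntegrable_finsum
    (f := fun j' u => π' j' * ∏ i ∈ T, stepf (|θ' j' - θ' i|) u) (fun j' => ?_)
  refine IntervalIntegrable.const_mul ?_ _
  -- product of step functions is a step function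
  have : (fun u => ∏ i ∈ T, stepf (|θ' j' - θ' i|) u)
      = fun u => if (∀ i ∈ T, |θ' j' - θ' i| ≤ u) then (1:ℝ) else 0 := by
    funext u; exact indT_eq T (fun i => |θ' j' - θ' i|) u
  rw [this]
  by_cases hT : T.Nonempty
  · have : (fun u => if (∀ i ∈ T, |θ' j' - θ' i| ≤ u) then (1:ℝ) else 0)
        = stepf (T.sup' hT (fun i => |θ' j' - θ' i|)) := by
      funext u
      unfold stepf
      exact if_congr (Iff.symm (Finset.sup'_le_iff hT _)) rfl rfl
    rw [this]
    exact intervalIntegrable_stepf _ _ _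
  · rw [Finset.not_nonempty_iff_eq_empty] at hT
    subst hT
    simp only [Finset.notMem_empty, false_implies, implies_true, if_true]
    exact intervalIntegrable_const

lemma intervalIntegrable_Fshift (π' θ' : Fin N → ℝ) (m x y : ℝ) :
    IntervalIntegrable (fun u => ∑ j', π' j' * stepf (θ' j') (m + u)) volume x y := by
  have : (fun u => ∑ j', π' j' * stepf (θ' j') (m + u))
      = fun u => ∑ j', π' j' * stepf (θ' j' - m) u := by
    funext u
    refine Finset.sum_congr rfl fun j' _ => ?_
    unfold stepf
    rw [if_congr (show (θ' j' ≤ m + u) ↔ (θ' j' - m ≤ u) from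
      by constructor <;> intro <;> linarith) rfl rfl]
  rw [this]
  exact intervalIntegrable_finsum (f := fun j' u => π' j' * stepf (θ' j' - m) u)
    (fun j' => (intervalIntegrable_stepf (θ' j' - m) x y).const_mul _)

lemma intervalIntegrable_Fminus (π' θ' : Fin N → ℝ) (M x y : ℝ) :
    IntervalIntegrable (fun u => ∑ j', π' j' * (if θ' j' < M - u then (1:ℝ) else 0))
      volume x y := by
  have : (fun u => ∑ j', π' j' * (if θ' j' < M - u then (1:ℝ) else 0))
      = fun u => ∑ j', π' j' * (1 - stepf (M - θ' j') u) := by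
    funext u
    refine Finset.sum_congr rfl fun j' _ => ?_
    unfold stepf
    congr 1
    by_cases hc : M - θ' j' ≤ u
    · rw [if_pos hc, if_neg (by intro hlt; linarith)]
      ring
    · rw [if_neg hc, if_pos (by push_neg at hc; linarith)]
      ring
  rw [this]
  exact intervalIntegrable_finsum (f := fun j' u => π' j' * (1 - stepf (M - θ' j') u))
    (fun j' => (intervalIntegrable_const.sub (intervalIntegrable_stepf (M - θ' j') x y)).const_mul _)

lemma key_T (π' θ' : Fin N → ℝ)
    (hInt : Integrable (fun t => ∑ j', π' j' * stepf (θ' j') t))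
    {T : Finset (Fin N)} (hT : T.Nonempty) {h : ℝ} (hh : 0 ≤ h) :
    |∫ u in (0:ℝ)..h, (∑ j', π' j' * (if (∀ i ∈ T, |θ' j' - θ' i| ≤ u) then (1:ℝ) else 0))|
      ≤ 2 * ∫ t, |∑ j', π' j' * stepf (θ' j') t| := by
  set F := fun t => ∑ j', π' j' * stepf (θ' j') t with hF
  set m := T.inf' hT θ' with hm
  set M := T.sup' hT θ' with hMdef
  have hIterm := intervalIntegrable_term π' θ' T 0 h
  have hIG1 : IntervalIntegrable (fun u => |F (m + u)|) volume 0 h :=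
    (intervalIntegrable_Fshift π' θ' m 0 h).abs
  have hIG2 : IntervalIntegrable
      (fun u => |∑ j', π' j' * (if θ' j' < M - u then (1:ℝ) else 0)|) volume 0 h :=
    (intervalIntegrable_Fminus π' θ' M 0 h).abs
  have habs : |∫ u in (0:ℝ)..h,
        (∑ j', π' j' * (if (∀ i ∈ T, |θ' j' - θ' i| ≤ u) then (1:ℝ) else 0))|
      ≤ ∫ u in (0:ℝ)..h,
        (|F (m + u)| + |∑ j', π' j' * (if θ' j' < M - u then (1:ℝ) else 0)|) := by
    refine le_trans ?_ (intervalIntegral.integral_mono_on hh hIterm.abs (hIG1.add hIG2)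
      (fun u _ => term_pointwise π' θ' hT u))
    have := intervalIntegral.norm_integral_le_integral_norm
      (f := fun u => ∑ j', π' j' * (if (∀ i ∈ T, |θ' j' - θ' i| ≤ u) then (1:ℝ) else 0))
      (μ := volume) (a := (0:ℝ)) (b := h) hh
    simpa [Real.norm_eq_abs] using this
  have hW0 : 0 ≤ ∫ t, |F t| := integral_nonneg fun t => abs_nonneg _
  have hsplit : ∫ u in (0:ℝ)..h,
        (|F (m + u)| + |∑ j', π' j' * (if θ' j' < M - u then (1:ℝ) else 0)|)
      = (∫ u in (0:ℝ)..h, |F (m + u)|)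
        + ∫ u in (0:ℝ)..h, |∑ j', π' j' * (if θ' j' < M - u then (1:ℝ) else 0)| :=
    intervalIntegral.integral_add hIG1 hIG2
  have hG1 : (∫ u in (0:ℝ)..h, |F (m + u)|) ≤ ∫ t, |F t| := by
    have hcomm : (fun u => |F (m + u)|) = fun u => |F (u + m)| := by
      funext u; rw [add_comm]
    rw [hcomm, intervalIntegral.integral_comp_add_right (fun y => |F y|) m, zero_add]
    rw [intervalIntegral.integral_of_le (by linarith : m ≤ h + m)]
    exact setIntegral_le_integral hInt.abs (ae_of_all _ fun t => abs_nonneg _)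
  have hG2 : (∫ u in (0:ℝ)..h, |∑ j', π' j' * (if θ' j' < M - u then (1:ℝ) else 0)|)
      ≤ ∫ t, |F t| := by
    rw [intervalIntegral.integral_comp_sub_left
      (fun y => |∑ j', π' j' * (if θ' j' < y then (1:ℝ) else 0)|) M, sub_zero]
    have hae : ∀ᵐ y : ℝ, y ∈ Set.Ioc (M - h) M →
        |∑ j', π' j' * (if θ' j' < y then (1:ℝ) else 0)| = |F y| := by
      have hz : (volume : Measure ℝ) (Set.range θ') = 0 :=
        (Set.finite_range θ').measure_zero _
      filter_upwards [measure_eq_zero_iff_ae_notMem.1 hz] with y hy _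
      congr 1
      refine Finset.sum_congr rfl fun j' _ => ?_
      have hne : θ' j' ≠ y := fun hc => hy ⟨j', hc⟩
      unfold stepf
      congr 1
      exact if_congr ⟨fun hlt => le_of_lt hlt, fun hle => lt_of_le_of_ne hle hne⟩ rfl rfl
    rw [intervalIntegral.integral_of_le (by linarith : M - h ≤ M)]
    rw [setIntegral_congr_ae measurableSet_Ioc hae]
    exact setIntegral_le_integral hInt.abs (ae_of_all _ fun t => abs_nonneg _)
  calc |∫ u in (0:ℝ)..h,
        (∑ j', π' j' * (if (∀ i ∈ T, |θ' j' - θ' i| ≤ u) then (1:ℝ) else 0))|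
      ≤ (∫ u in (0:ℝ)..h, |F (m + u)|)
        + ∫ u in (0:ℝ)..h, |∑ j', π' j' * (if θ' j' < M - u then (1:ℝ) else 0)| := by
        rw [← hsplit]; exact habs
    _ ≤ (∫ t, |F t|) + ∫ t, |F t| := add_le_add hG1 hG2
    _ = 2 * ∫ t, |F t| := by ring


lemma F_lower (π' θ' : Fin N → ℝ) (hsum : ∑ j, π' j = 0)
    (hInt : Integrable (fun t => ∑ j', π' j' * stepf (θ' j') t))
    (J : Finset (Fin N)) {h : ℝ} (hh : 0 < h)
    (hsep : ∀ j ∈ J, ∀ k : Fin N, k ∉ J → 2 * h ≤ |θ' k - θ' j|) :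
    h * |∑ j ∈ J, π' j| ≤ 2 ^ N * (2 * ∫ t, |∑ j', π' j' * stepf (θ' j') t|) := by
  have hpt : ∀ u : ℝ, 0 ≤ u → u ≤ h →
      (∑ j ∈ J, π' j) = -∑ T ∈ J.powerset, ((-1:ℝ)) ^ T.card *
        (∑ j', π' j' * (if (∀ i ∈ T, |θ' j' - θ' i| ≤ u) then (1:ℝ) else 0)) := by
    intro u hu0 huh
    have hA : ∀ j' : Fin N,
        (∏ i ∈ J, ((1:ℝ) - (if |θ' j' - θ' i| ≤ u then (1:ℝ) else 0)))
          = if j' ∈ J then 0 else 1 := by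
      intro j'
      by_cases hj' : j' ∈ J
      · rw [if_pos hj']
        refine Finset.prod_eq_zero hj' ?_
        rw [if_pos (by rw [sub_self, abs_zero]; exact hu0)]
        ring
      · rw [if_neg hj']
        have hfac : ∀ i ∈ J, (1:ℝ) - (if |θ' j' - θ' i| ≤ u then (1:ℝ) else 0) = 1 := by
          intro i hi
          rw [if_neg (not_le.2 (by linarith [hsep i hi j' hj']))]
          ring
        rw [Finset.prod_congr rfl hfac, Finset.prod_const_one]
    have hB : ∀ j' : Fin N,
        (∏ i ∈ J, ((1:ℝ) - (if |θ' j' - θ' i| ≤ u then (1:ℝ) else 0)))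
          = ∑ T ∈ J.powerset, ((-1:ℝ)) ^ T.card *
              (if (∀ i ∈ T, |θ' j' - θ' i| ≤ u) then (1:ℝ) else 0) := by
      intro j'
      have h1 : ∀ i ∈ J, (1:ℝ) - (if |θ' j' - θ' i| ≤ u then (1:ℝ) else 0)
          = (-(if |θ' j' - θ' i| ≤ u then (1:ℝ) else 0)) + 1 := fun i _ => by ring
      rw [Finset.prod_congr rfl h1, Finset.prod_add]
      refine Finset.sum_congr rfl fun T hT => ?_
      rw [Finset.prod_const_one, mul_one, prod_neg_ind T (fun i => |θ' j' - θ' i|) u,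
        indT_eq T (fun i => |θ' j' - θ' i|) u]
    have hC : (∑ j ∈ J, π' j) = -∑ j', π' j' * (if j' ∈ J then (0:ℝ) else 1) := by
      have hterm : ∀ j' : Fin N, π' j' * (if j' ∈ J then (0:ℝ) else 1)
          = π' j' - (if j' ∈ J then π' j' else 0) := by
        intro j'; by_cases hj : j' ∈ J <;> simp [hj]
      rw [Finset.sum_congr rfl (fun j' _ => hterm j'), Finset.sum_sub_distrib, hsum,
        Finset.sum_ite_mem, Finset.univ_inter]
      ring
    rw [hC]
    congr 1
    calc ∑ j', π' j' * (if j' ∈ J then (0:ℝ) else 1)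
        = ∑ j', π' j' * ∑ T ∈ J.powerset, ((-1:ℝ)) ^ T.card *
            (if (∀ i ∈ T, |θ' j' - θ' i| ≤ u) then (1:ℝ) else 0) := by
          refine Finset.sum_congr rfl fun j' _ => ?_
          rw [← hB j', hA j']
      _ = ∑ j', ∑ T ∈ J.powerset, ((-1:ℝ)) ^ T.card *
            (π' j' * (if (∀ i ∈ T, |θ' j' - θ' i| ≤ u) then (1:ℝ) else 0)) := by
          refine Finset.sum_congr rfl fun j' _ => ?_
          rw [Finset.mul_sum]
          exact Finset.sum_congr rfl fun T _ => by ring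
      _ = ∑ T ∈ J.powerset, ∑ j', ((-1:ℝ)) ^ T.card *
            (π' j' * (if (∀ i ∈ T, |θ' j' - θ' i| ≤ u) then (1:ℝ) else 0)) :=
          Finset.sum_comm
      _ = ∑ T ∈ J.powerset, ((-1:ℝ)) ^ T.card *
            (∑ j', π' j' * (if (∀ i ∈ T, |θ' j' - θ' i| ≤ u) then (1:ℝ) else 0)) := by
          refine Finset.sum_congr rfl fun T _ => ?_
          rw [Finset.mul_sum]
  have hint_eq : h * (∑ j ∈ J, π' j)
      = -∑ T ∈ J.powerset, ((-1:ℝ)) ^ T.card *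
          ∫ u in (0:ℝ)..h,
            (∑ j', π' j' * (if (∀ i ∈ T, |θ' j' - θ' i| ≤ u) then (1:ℝ) else 0)) := by
    have h1 : h * (∑ j ∈ J, π' j) = ∫ u in (0:ℝ)..h, (∑ j ∈ J, π' j) := by
      rw [intervalIntegral.integral_const, smul_eq_mul, sub_zero]
    rw [h1]
    have h2 : (∫ u in (0:ℝ)..h, (∑ j ∈ J, π' j))
        = ∫ u in (0:ℝ)..h, (-∑ T ∈ J.powerset, ((-1:ℝ)) ^ T.card *
            (∑ j', π' j' * (if (∀ i ∈ T, |θ' j' - θ' i| ≤ u) then (1:ℝ) else 0))) := by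
      refine intervalIntegral.integral_congr fun u hu => ?_
      rw [Set.uIcc_of_le hh.le] at hu
      exact hpt u hu.1 hu.2
    rw [h2, intervalIntegral.integral_neg]
    congr 1
    rw [intervalIntegral.integral_finset_sum
      (fun T _ => (intervalIntegrable_term π' θ' T 0 h).const_mul _)]
    exact Finset.sum_congr rfl fun T _ => intervalIntegral.integral_const_mul _ _
  have hWnn : 0 ≤ ∫ t, |∑ j', π' j' * stepf (θ' j') t| :=
    integral_nonneg fun t => abs_nonneg _
  calc h * |∑ j ∈ J, π' j| = |h * ∑ j ∈ J, π' j| := by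
        rw [abs_mul, abs_of_pos hh]
    _ = |∑ T ∈ J.powerset, ((-1:ℝ)) ^ T.card *
          ∫ u in (0:ℝ)..h,
            (∑ j', π' j' * (if (∀ i ∈ T, |θ' j' - θ' i| ≤ u) then (1:ℝ) else 0))| := by
        rw [hint_eq, abs_neg]
    _ ≤ ∑ T ∈ J.powerset, |((-1:ℝ)) ^ T.card *
          ∫ u in (0:ℝ)..h,
            (∑ j', π' j' * (if (∀ i ∈ T, |θ' j' - θ' i| ≤ u) then (1:ℝ) else 0))| :=
        Finset.abs_sum_le_sum_abs _ _
    _ ≤ ∑ _T ∈ J.powerset, 2 * ∫ t, |∑ j', π' j' * stepf (θ' j') t| := by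
        refine Finset.sum_le_sum fun T _ => ?_
        rw [abs_mul, abs_pow, abs_neg, abs_one, one_pow, one_mul]
        rcases T.eq_empty_or_nonempty with rfl | hT
        · have hzero : (fun u => ∑ j', π' j' *
              (if (∀ i ∈ (∅ : Finset (Fin N)), |θ' j' - θ' i| ≤ u) then (1:ℝ) else 0))
              = fun _ => (0:ℝ) := by
            funext u
            rw [Finset.sum_congr rfl (fun j' _ => by
              rw [if_pos (fun i hi => absurd hi (Finset.notMem_empty i)), mul_one])]
            exact hsum
          rw [intervalIntegral.integral_congr (fun u _ => congrFun hzero u)]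
          rw [intervalIntegral.integral_zero, abs_zero]
          positivity
        · exact key_T π' θ' hInt hT hh.le
    _ = 2 ^ J.card * (2 * ∫ t, |∑ j', π' j' * stepf (θ' j') t|) := by
        rw [Finset.sum_const, Finset.card_powerset, nsmul_eq_mul]
        norm_num
    _ ≤ 2 ^ N * (2 * ∫ t, |∑ j', π' j' * stepf (θ' j') t|) := by
        have hcard : J.card ≤ N := le_trans (Finset.card_le_univ J) (by simp)
        have hpow : (2:ℝ) ^ J.card ≤ 2 ^ N :=
          pow_le_pow_right₀ (by norm_num) hcard
        nlinarith


end Stmt19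

/-- Lemma: the Wasserstein distance in terms of the scaling tree:
`W(G_{1,n}, G_{2,n}) ≍ max_{J ∈ 𝒯, J ≠ J₀} ε_{𝔳(J),n} ε_{𝔰(p(J)),n}`. -/
theorem stmt_19 (Θ : Set ℝ) (hΘ : IsCompact Θ) (N : ℕ) (hN : 0 < N)
    (π : ℕ → Fin N → ℝ) (θv : ℕ → Fin N → ℝ)
    (hπ : ∀ n j, π n j ≠ 0) (hθΘ : ∀ n j, θv n j ∈ Θ)
    (hp1 : ∀ n, ∑ j ∈ univ.filter (fun j => 0 < π n j), π n j = 1)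
    (hp2 : ∀ n, ∑ j ∈ univ.filter (fun j => π n j < 0), -(π n j) = 1)
    (S : ℕ) (hS : 1 ≤ S) (eps : ℕ → ℕ → ℝ)
    (heps0 : ∀ n, eps 0 n = 0) (hepsS : ∀ n, eps S n = 1)
    (hmono : ∀ n, ∀ t < S, eps t n < eps (t + 1) n)
    (hlittleo : ∀ t < S, Tendsto (fun n => eps t n / eps (t + 1) n) atTop (nhds 0))
    (s : Fin N → Fin N → ℕ) (hsle : ∀ j k, s j k ≤ S)
    (hsymm : ∀ j k, s j k = s k j) (hdiag : ∀ j, s j j = 0)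
    (hultra : ∀ j k l, s j k ≤ max (s j l) (s l k))
    (v : Finset (Fin N) → ℕ) (hvle : ∀ J, v J ≤ S)
    (hs_asymp : ∀ j k : Fin N, ∃ c C : ℝ, 0 < c ∧ ∀ n,
      c * eps (s j k) n ≤ |θv n j - θv n k| ∧ |θv n j - θv n k| ≤ C * eps (s j k) n)
    (hv_asymp : ∀ J : Finset (Fin N), ∃ c C : ℝ, 0 < c ∧ ∀ n,
      c * eps (v J) n ≤ |∑ j ∈ J, π n j| ∧ |∑ j ∈ J, π n j| ≤ C * eps (v J) n) :
    ∃ c C : ℝ, 0 < c ∧ ∀ n : ℕ,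
      c * sSup {r : ℝ | ∃ J K : Finset (Fin N), J ∈ treeVerts s S ∧ J ≠ Finset.univ ∧
            IsParent s S K J ∧ r = eps (v J) n * eps (sDiam s K) n} ≤
          wass
            (∑ j ∈ univ.filter (fun j => 0 < π n j),
              ENNReal.ofReal (π n j) • Measure.dirac (θv n j))
            (∑ j ∈ univ.filter (fun j => π n j < 0),
              ENNReal.ofReal (-(π n j)) • Measure.dirac (θv n j)) ∧
        wass
            (∑ j ∈ univ.filter (fun j => 0 < π n j),
              ENNReal.ofReal (π n j) • Measure.dirac (θv n j))
            (∑ j ∈ univ.filter (fun j => π n j < 0),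
              ENNReal.ofReal (-(π n j)) • Measure.dirac (θv n j)) ≤
          C * sSup {r : ℝ | ∃ J K : Finset (Fin N), J ∈ treeVerts s S ∧ J ≠ Finset.univ ∧
            IsParent s S K J ∧ r = eps (v J) n * eps (sDiam s K) n} := by
  classical
  -- choose constants
  have hcs' : ∀ p : Fin N × Fin N, ∃ c C : ℝ, 0 < c ∧ ∀ n,
      c * eps (s p.1 p.2) n ≤ |θv n p.1 - θv n p.2| ∧
        |θv n p.1 - θv n p.2| ≤ C * eps (s p.1 p.2) n := fun p => hs_asymp p.1 p.2
  choose cs Cs hcs_pos hcs_bound using hcs'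
  choose cv Cv hcv_pos hcv_bound using hv_asymp
  have hNE : (Finset.univ : Finset (Fin N × Fin N)).Nonempty :=
    ⟨(⟨0, hN⟩, ⟨0, hN⟩), Finset.mem_univ _⟩
  have hNEv : (Finset.univ : Finset (Finset (Fin N))).Nonempty := ⟨∅, Finset.mem_univ _⟩
  set cS := Finset.univ.inf' hNE cs with hcSdef
  set CS := Finset.univ.sup' hNE (fun p => max (Cs p) 0) with hCSdef
  set cV := Finset.univ.inf' hNEv cv with hcVdef
  set CV := Finset.univ.sup' hNEv (fun J => max (Cv J) 0) with hCVdef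
  have hcS_pos : 0 < cS := (Finset.lt_inf'_iff hNE).2 fun p _ => hcs_pos p
  have hcV_pos : 0 < cV := (Finset.lt_inf'_iff hNEv).2 fun J _ => hcv_pos J
  have hcS_le : ∀ p : Fin N × Fin N, cS ≤ cs p := fun p => Finset.inf'_le _ (Finset.mem_univ p)
  have hcV_le : ∀ J, cV ≤ cv J := fun J => Finset.inf'_le _ (Finset.mem_univ J)
  have hCS_ge : ∀ p : Fin N × Fin N, Cs p ≤ CS := fun p =>
    le_trans (le_max_left _ _)
      (Finset.le_sup' (f := fun p => max (Cs p) 0) (Finset.mem_univ p))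
  have hCV_ge : ∀ J, Cv J ≤ CV := fun J =>
    le_trans (le_max_left _ _)
      (Finset.le_sup' (f := fun J => max (Cv J) 0) (Finset.mem_univ J))
  have hCS_nn : 0 ≤ CS := le_trans (le_max_right _ _)
    (Finset.le_sup' (f := fun p => max (Cs p) 0) (Finset.mem_univ (⟨0, hN⟩, ⟨0, hN⟩)))
  have hCV_nn : 0 ≤ CV := le_trans (le_max_right _ _)
    (Finset.le_sup' (f := fun J => max (Cv J) 0) (Finset.mem_univ ∅))
  -- per-n basic objects
  have hsum : ∀ n, ∑ j, π n j = 0 := fun n =>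
    Stmt19.total_mass_zero (π n) (hπ n) (hp1 n) (hp2 n)
  have hθ0 : ∀ n (j k : Fin N), s j k = 0 → θv n j = θv n k := by
    intro n j k hjk
    have h2 := (hcs_bound (j, k) n).2
    rw [hjk, heps0 n, mul_zero] at h2
    have := abs_nonneg (θv n j - θv n k)
    have habs : |θv n j - θv n k| = 0 := le_antisymm h2 this
    have := abs_eq_zero.1 habs
    linarith
  have hInt : ∀ n, Integrable (fun t => ∑ j, π n j * Stmt19.stepf (θv n j) t) := fun n =>
    Stmt19.F_integrable hN hsymm hultra hdiag hsle (π n) (θv n) (hsum n) (hθ0 n)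
  have hwass : ∀ n, wass
      (∑ j ∈ univ.filter (fun j => 0 < π n j),
        ENNReal.ofReal (π n j) • Measure.dirac (θv n j))
      (∑ j ∈ univ.filter (fun j => π n j < 0),
        ENNReal.ofReal (-(π n j)) • Measure.dirac (θv n j))
      = ∫ t, |∑ j, π n j * Stmt19.stepf (θv n j) t| := by
    intro n
    unfold wass
    congr 1
    funext t
    rw [Stmt19.cdf_eq (π n) (θv n) (hπ n) t]
  have hWnn : ∀ n, 0 ≤ ∫ t, |∑ j, π n j * Stmt19.stepf (θv n j) t| := fun n =>
    integral_nonneg fun t => abs_nonneg _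
  -- facts about the sup set
  set Sset : ℕ → Set ℝ := fun n => {r : ℝ | ∃ J K : Finset (Fin N), J ∈ treeVerts s S ∧
    J ≠ Finset.univ ∧ IsParent s S K J ∧ r = eps (v J) n * eps (sDiam s K) n} with hSset
  have hfin : ∀ n, (Sset n).Finite := by
    intro n
    refine Set.Finite.subset (Set.finite_range
      (fun JK : Finset (Fin N) × Finset (Fin N) => eps (v JK.1) n * eps (sDiam s JK.2) n)) ?_
    rintro r ⟨J, K, _, _, _, rfl⟩
    exact ⟨(J, K), rfl⟩
  have hbdd : ∀ n, BddAbove (Sset n) := fun n => (hfin n).bddAbove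
  have hmemnn : ∀ n, ∀ r ∈ Sset n, 0 ≤ r := by
    rintro n r ⟨J, K, _, _, _, rfl⟩
    exact mul_nonneg (Stmt19.eps_nonneg heps0 hmono n (hvle J))
      (Stmt19.eps_nonneg heps0 hmono n (Stmt19.sDiam_le_S hsle K))
  have hsupnn : ∀ n, 0 ≤ sSup (Sset n) := fun n => Real.sSup_nonneg (hmemnn n)
  refine ⟨cS * cV / 2 ^ (N + 2), (S : ℝ) * N * (CV * CS), by positivity, fun n => ?_⟩
  constructor
  · -- lower bound
    rw [hwass n]
    set W := ∫ t, |∑ j, π n j * Stmt19.stepf (θv n j) t| with hWdef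
    have hkey : ∀ r ∈ Sset n, cS * cV / 2 ^ (N + 2) * r ≤ W := by
      rintro r ⟨J, K, hJv, hJne, hPar, rfl⟩
      set D := sDiam s K with hD
      have hD1 : 1 ≤ D := Stmt19.parent_sDiam_pos hsymm hultra hdiag hsle hJv hPar
      have hDS : D ≤ S := Stmt19.sDiam_le_S hsle K
      have hepsD : 0 < eps D n := Stmt19.eps_pos heps0 hmono n hD1 hDS
      set h := cS * eps D n / 2 with hhdef
      have hh : 0 < h := by positivity
      have hsep : ∀ j ∈ J, ∀ k : Fin N, k ∉ J → 2 * h ≤ |θv n k - θv n j| := by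
        intro j hj k hk
        have hDs : D ≤ s k j := hsymm k j ▸ Stmt19.parent_sep hsymm hultra hsle hJv hPar hj hk
        have h1 : eps D n ≤ eps (s k j) n := Stmt19.eps_mono hmono n hDs (hsle k j)
        have h2 := (hcs_bound (k, j) n).1
        have h3 : cS * eps (s k j) n ≤ cs (k, j) * eps (s k j) n :=
          mul_le_mul_of_nonneg_right (hcS_le (k, j))
            (Stmt19.eps_nonneg heps0 hmono n (hsle k j))
        have h4 : cS * eps D n ≤ cS * eps (s k j) n :=
          mul_le_mul_of_nonneg_left h1 hcS_pos.le
        calc 2 * h = cS * eps D n := by rw [hhdef]; ring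
          _ ≤ cS * eps (s k j) n := h4
          _ ≤ cs (k, j) * eps (s k j) n := h3
          _ ≤ |θv n k - θv n j| := h2
      have hFl := Stmt19.F_lower (π n) (θv n) (hsum n) (hInt n) J hh hsep
      have hπJ : cv J * eps (v J) n ≤ |∑ j ∈ J, π n j| := (hcv_bound J n).1
      have hπJ' : cV * eps (v J) n ≤ |∑ j ∈ J, π n j| :=
        le_trans (mul_le_mul_of_nonneg_right (hcV_le J)
          (Stmt19.eps_nonneg heps0 hmono n (hvle J))) hπJ
      have hchain : h * (cV * eps (v J) n) ≤ 2 ^ N * (2 * W) :=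
        le_trans (mul_le_mul_of_nonneg_left hπJ' hh.le) hFl
      have hexp : h * (cV * eps (v J) n) = cS * cV / 2 * (eps (v J) n * eps D n) := by
        rw [hhdef]; ring
      rw [hexp] at hchain
      have hp4 : (2:ℝ) ^ (N + 2) = 4 * 2 ^ N := by rw [pow_add]; ring
      have h2N : (0:ℝ) < 2 ^ (N + 2) := by positivity
      rw [div_mul_eq_mul_div, div_le_iff₀ h2N, hp4]
      nlinarith [hchain]
    have hc0 : (0:ℝ) < cS * cV / 2 ^ (N + 2) := by positivity
    have hsle' : sSup (Sset n) ≤ W / (cS * cV / 2 ^ (N + 2)) := by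
      refine Real.sSup_le (fun r hr => ?_) (div_nonneg (hWnn n) (by positivity))
      rw [le_div_iff₀ hc0]
      calc r * (cS * cV / 2 ^ (N + 2)) = cS * cV / 2 ^ (N + 2) * r := by ring
        _ ≤ W := hkey r hr
    calc cS * cV / 2 ^ (N + 2) * sSup (Sset n)
        ≤ cS * cV / 2 ^ (N + 2) * (W / (cS * cV / 2 ^ (N + 2))) :=
          mul_le_mul_of_nonneg_left hsle' hc0.le
      _ = W := by field_simp
  · -- upper bound
    rw [hwass n]
    have hup := Stmt19.F_upper hN hsymm hultra hdiag hsle (π n) (θv n) (hsum n) (hθ0 n)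
    set X := sSup (Sset n) with hX
    have hterm : ∀ u ∈ Finset.range S, ∀ j ∈ univ.filter (fun j => Stmt19.rep s j u = j),
        |∑ k ∈ umBall s j u, π n k| * |θv n j - θv n (Stmt19.rep s j (u + 1))|
          ≤ CV * CS * X := by
      intro u hu j hj
      have huS : u < S := Finset.mem_range.1 hu
      have hjrep : Stmt19.rep s j u = j := (Finset.mem_filter.1 hj).2
      by_cases hball : umBall s j u = umBall s j (u + 1)
      · have hrepeq : Stmt19.rep s j (u + 1) = j := by
          rw [← Stmt19.rep_eq_of_ball_eq hdiag hball, hjrep]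
        rw [hrepeq, sub_self, abs_zero, mul_zero]
        have : 0 ≤ X := hsupnn n
        positivity
      · -- genuine parent-child pair
        set J := umBall s j u with hJdef
        set K := umBall s j (u + 1) with hKdef
        have hJK : J ⊆ K := fun l hl =>
          Stmt19.mem_umBall.2 (le_trans (Stmt19.mem_umBall.1 hl) (Nat.le_succ u))
        have hJKs : J ⊂ K := ssubset_of_ne_of_subset hball hJK
        have hJv : J ∈ treeVerts s S := ⟨j, u, le_of_lt huS, rfl⟩
        have hKv : K ∈ treeVerts s S := ⟨j, u + 1, huS, rfl⟩
        have hJne : J ≠ Finset.univ := by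
          intro hJu
          refine hball ?_
          rw [hJu] at hJK ⊢
          exact (Finset.eq_univ_iff_forall.2 fun k => hJK (Finset.mem_univ k)).symm ▸ rfl
        have hPar : IsParent s S K J := by
          refine ⟨hKv, hJKs, fun H hHv hJH => ?_⟩
          obtain ⟨j'', t'', ht'', hHeq⟩ := hHv
          have hjH : j ∈ H := hJH.subset (Stmt19.self_mem_umBall hdiag j u)
          have hHeq2 : H = umBall s j t'' := by
            rw [hHeq]
            exact Stmt19.umBall_eq_of_mem hsymm hultra (Stmt19.mem_umBall.1 (hHeq ▸ hjH))
          have ht2 : u + 1 ≤ t'' := by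
            by_contra hlt
            push_neg at hlt
            have hsub : H ⊆ J := by
              rw [hHeq2, hJdef]
              intro l hl
              exact Stmt19.mem_umBall.2 (le_trans (Stmt19.mem_umBall.1 hl) (by omega))
            exact hJH.not_subset hsub
          rw [hHeq2, hKdef]
          intro l hl
          exact Stmt19.mem_umBall.2 (le_trans (Stmt19.mem_umBall.1 hl) ht2)
        have hmem : eps (v J) n * eps (sDiam s K) n ∈ Sset n := ⟨J, K, hJv, hJne, hPar, rfl⟩
        have helem : eps (v J) n * eps (sDiam s K) n ≤ X := le_csSup (hbdd n) hmem
        -- bound the weight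
        have hw : |∑ k ∈ umBall s j u, π n k| ≤ CV * eps (v J) n :=
          le_trans (hcv_bound J n).2 (mul_le_mul_of_nonneg_right (hCV_ge J)
            (Stmt19.eps_nonneg heps0 hmono n (hvle J)))
        -- bound the distance
        have hρK : Stmt19.rep s j (u + 1) ∈ K := Stmt19.rep_mem hdiag j (u + 1)
        have hjK : j ∈ K := Stmt19.self_mem_umBall hdiag j (u + 1)
        have hsd : s j (Stmt19.rep s j (u + 1)) ≤ sDiam s K := Stmt19.s_le_sDiam hjK hρK
        have hd : |θv n j - θv n (Stmt19.rep s j (u + 1))| ≤ CS * eps (sDiam s K) n := by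
          refine le_trans (hcs_bound (j, Stmt19.rep s j (u + 1)) n).2 ?_
          have he1 : eps (s j (Stmt19.rep s j (u + 1))) n ≤ eps (sDiam s K) n :=
            Stmt19.eps_mono hmono n hsd (Stmt19.sDiam_le_S hsle K)
          have he0 : 0 ≤ eps (s j (Stmt19.rep s j (u + 1))) n :=
            Stmt19.eps_nonneg heps0 hmono n (hsle _ _)
          calc Cs (j, Stmt19.rep s j (u + 1)) * eps (s j (Stmt19.rep s j (u + 1))) n
              ≤ CS * eps (s j (Stmt19.rep s j (u + 1))) n :=
                mul_le_mul_of_nonneg_right (hCS_ge _) he0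
            _ ≤ CS * eps (sDiam s K) n := mul_le_mul_of_nonneg_left he1 hCS_nn
        calc |∑ k ∈ umBall s j u, π n k| * |θv n j - θv n (Stmt19.rep s j (u + 1))|
            ≤ (CV * eps (v J) n) * (CS * eps (sDiam s K) n) :=
              mul_le_mul hw hd (abs_nonneg _)
                (mul_nonneg hCV_nn (Stmt19.eps_nonneg heps0 hmono n (hvle J)))
          _ = CV * CS * (eps (v J) n * eps (sDiam s K) n) := by ring
          _ ≤ CV * CS * X := mul_le_mul_of_nonneg_left helem (mul_nonneg hCV_nn hCS_nn)
    have hXnn : 0 ≤ X := hsupnn n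
    calc ∫ t, |∑ j, π n j * Stmt19.stepf (θv n j) t|
        ≤ ∑ u ∈ Finset.range S, ∑ j ∈ univ.filter (fun j => Stmt19.rep s j u = j),
            |∑ k ∈ umBall s j u, π n k| * |θv n j - θv n (Stmt19.rep s j (u + 1))| := hup
      _ ≤ ∑ u ∈ Finset.range S, ∑ _j ∈ univ.filter (fun j => Stmt19.rep s j u = j),
            CV * CS * X := by
          exact Finset.sum_le_sum fun u hu => Finset.sum_le_sum fun j hj => hterm u hu j hj
      _ ≤ ∑ _u ∈ Finset.range S, (N : ℝ) * (CV * CS * X) := by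
          refine Finset.sum_le_sum fun u _ => ?_
          rw [Finset.sum_const, nsmul_eq_mul]
          refine mul_le_mul_of_nonneg_right ?_ (mul_nonneg (mul_nonneg hCV_nn hCS_nn) hXnn)
          have := Finset.card_filter_le Finset.univ (fun j => Stmt19.rep s j u = j)
          have hcard : (univ.filter (fun j => Stmt19.rep s j u = j)).card ≤ N := by
            simpa using this
          exact_mod_cast hcard
      _ = (S : ℝ) * N * (CV * CS) * X := by
          rw [Finset.sum_const, Finset.card_range, nsmul_eq_mul]
          ring
end
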